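/- arXiv:2111.06775 — 10 statements merged into one kernel-verified Lean document; each statement's English description precedes it below -/
import Mathlib

section
/- Let U ⊆ ℝⁿ be open, let x⁰ ∈ U, let g : U → ℝ be continuous and let g₁, …, g_k : U → ℝ be C¹ functions with g(x) ∈ {g₁(x), …, g_k(x)} for all x ∈ U. Assume: (i) g_i(x⁰) = g(x⁰) for all i ∈ {1,…,k}; (ii) I^e(x) = I(x) for all x ∈ U; (iii) the affine dimension of affineSpan({∇g_i(x) : i ∈ {1,…,k}}) equals d := affdim(affineSpan({∇g_i(x⁰) : i ∈ {1,…,k}})) for every x ∈ U. Let i₁, …, i_{d+1} ∈ {1,…,k} be indices such that {∇g_{i₁}(x⁰), …, ∇g_{i_{d+1}}(x⁰)} is an affinely independent set (hence an affine basis of affineSpan({∇g_i(x⁰) : i ∈ {1,…,k}})). Then there exists an open neighborhood U' ⊆ U of x⁰ such that for all x ∈ U': (g_i(x) − g₁(x) = 0 for all i ∈ {2,…,k}) if and only if (g_{i_j}(x) − g_{i₁}(x) = 0 for all j ∈ {2,…,d+1}); in particular {x ∈ U' : I^e(x) = {1,…,k}} = {x ∈ U' : g_{i_j}(x) − g_{i₁}(x)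 = 0 for all j ∈ {2,…,d+1}}. -/
open InnerProductSpace Set Metric

section Aux

variable {n : ℕ}

local notation "E" => EuclideanSpace ℝ (Fin n)

lemma toDual_gradient' (f : E → ℝ) (x : E) :
    InnerProductSpace.toDual ℝ E (gradient f x) = fderiv ℝ f x :=
  (InnerProductSpace.toDual ℝ E).apply_symm_apply _

set_option maxHeartbeats 2000000 in
lemma key {d k : ℕ} {U : Set (EuclideanSpace ℝ (Fin n))} (hU : IsOpen U)
    {x0 : EuclideanSpace ℝ (Fin n)} (hx0 : x0 ∈ U)
    (φ : Fin k → E → ℝ) (ψ : Fin d → E → ℝ)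
    (hφ : ∀ i, ContDiffOn ℝ 1 (φ i) U) (hψ : ∀ j, ContDiffOn ℝ 1 (ψ j) U)
    (hφ0 : ∀ i, φ i x0 = 0) (hψ0 : ∀ j, ψ j x0 = 0)
    (hspan : ∀ x ∈ U, ∀ i, gradient (φ i) x ∈
      Submodule.span ℝ (Set.range fun j => gradient (ψ j) x))
    (hli : LinearIndependent ℝ (fun j => gradient (ψ j) x0)) :
    ∃ U', IsOpen U' ∧ x0 ∈ U' ∧ U' ⊆ U ∧
      ∀ x ∈ U', (∀ j, ψ j x = 0) → ∀ i, φ i x = 0 := by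
  classical
  -- differentiability facts
  have hdφ : ∀ i, ∀ x ∈ U, HasFDerivAt (φ i) (fderiv ℝ (φ i) x) x := fun i x hx =>
    (((hφ i).differentiableOn one_ne_zero).differentiableAt (hU.mem_nhds hx)).hasFDerivAt
  have hdψ : ∀ j, ∀ x ∈ U, HasFDerivAt (ψ j) (fderiv ℝ (ψ j) x) x := fun j x hx =>
    (((hψ j).differentiableOn one_ne_zero).differentiableAt (hU.mem_nhds hx)).hasFDerivAt
  -- the coefficient representation of fderiv φ i
  have hrep : ∀ x ∈ U, ∀ i, ∃ c : Fin d → ℝ,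
      fderiv ℝ (φ i) x = ∑ j, c j • fderiv ℝ (ψ j) x := by
    intro x hx i
    obtain ⟨c, hc⟩ := (Submodule.mem_span_range_iff_exists_fun ℝ).mp (hspan x hx i)
    refine ⟨c, ?_⟩
    rw [← toDual_gradient', ← hc, map_sum]
    simp [toDual_gradient']
  set v : Fin d → E := fun j => gradient (ψ j) x0 with hv
  set W : Submodule ℝ E := Submodule.span ℝ (Set.range v) with hW
  haveI : FiniteDimensional ℝ W := inferInstance
  set b : Module.Basis (Fin d) ℝ W := Module.Basis.span hli with hb
  set P := W.orthogonalProjectionOnto with hP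
  set ℓ : Fin d → (E →L[ℝ] ℝ) :=
    fun j => (LinearMap.toContinuousLinearMap (b.coord j)).comp P with hℓ
  set G : E → E := fun x => (x - (P x : E)) + ∑ j, ψ j x • v j with hG
  have hℓperp : ∀ j, ∀ u ∈ Wᗮ, ℓ j u = 0 := by
    intro j u hu
    simp only [hℓ, ContinuousLinearMap.comp_apply]
    rw [hP, Submodule.orthogonalProjectionOnto_apply_of_mem_orthogonal hu]
    simp
  have hℓv : ∀ j i, ℓ j (v i) = if i = j then 1 else 0 := by
    intro j i
    have hvi : v i ∈ W := Submodule.subset_span (mem_range_self i)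
    have hPv : P (v i) = b i := by
      rw [hP]
      have := Submodule.orthogonalProjectionOnto_mem_subspace_eq_self (K := W) ⟨v i, hvi⟩
      rw [show ((⟨v i, hvi⟩ : W) : E) = v i from rfl] at this
      rw [this]
      apply Subtype.ext
      simp only [hb]
      exact (congrArg Subtype.val (Module.Basis.span_apply hli i)).symm
    simp only [hℓ, ContinuousLinearMap.comp_apply, hPv]
    simp [Module.Basis.coord_apply, Module.Basis.repr_self, Finsupp.single_apply]
  have hℓG : ∀ j x, ℓ j (G x) = ψ j x := by
    intro j x
    simp only [hG, map_add, map_sum]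
    rw [hℓperp j (x - (P x : E)) (W.sub_starProjection_mem_orthogonal x)]
    have : ∀ i : Fin d, ℓ j (ψ i x • v i) = if i = j then ψ i x else 0 := by
      intro i
      rw [map_smul, hℓv j i]
      by_cases h : i = j <;> simp [h]
    rw [Finset.sum_congr rfl fun i _ => this i]
    simp
  -- derivative of G at x0
  set L : E →L[ℝ] E := ContinuousLinearMap.id ℝ _ - (W.subtypeL.comp P) with hLdef
  have hLfun : (fun x : E => x - (P x : E)) = ⇑L := by
    ext u
    simp [hLdef]
  set T0 : E →L[ℝ] E := L + ∑ j, (fderiv ℝ (ψ j) x0).smulRight (v j) with hT0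
  have hGT : HasFDerivAt G T0 x0 := by
    rw [hG, hT0]
    refine HasFDerivAt.add ?_ ?_
    · rw [hLfun]; exact L.hasFDerivAt
    · exact HasFDerivAt.fun_sum fun j _ => (hdψ j x0 hx0).smul_const (v j)
  have hfd_v : ∀ j, fderiv ℝ (ψ j) x0 = InnerProductSpace.toDual ℝ E (v j) := by
    intro j
    rw [hv]
    exact (toDual_gradient' _ _).symm
  have hTinj : Function.Injective T0 := by
    intro u u' huu
    have hu : T0 (u - u') = 0 := by rw [map_sub, huu, sub_self]
    suffices h : u - u' = 0 from sub_eq_zero.mp h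
    set w := u - u' with hwdef
    have hexp : (w - (P w : E)) + ∑ j, (fderiv ℝ (ψ j) x0 w) • v j = 0 := by
      have := hu
      rw [hT0] at this
      simpa [hLdef, ContinuousLinearMap.smulRight_apply] using this
    have hamem : w - (P w : E) ∈ Wᗮ := W.sub_starProjection_mem_orthogonal w
    have hbmem : ∑ j, (fderiv ℝ (ψ j) x0 w) • v j ∈ W :=
      Submodule.sum_mem _ fun j _ => Submodule.smul_mem _ _ (Submodule.subset_span (mem_range_self j))
    have ha0 : w - (P w : E) = 0 := by
      have hmemW : w - (P w : E) ∈ W := by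
        have : w - (P w : E) = -(∑ j, (fderiv ℝ (ψ j) x0 w) • v j) := by
          rw [eq_neg_iff_add_eq_zero]; exact hexp
        rw [this]; exact W.neg_mem hbmem
      have := (Submodule.orthogonal_disjoint W).le_bot ⟨hmemW, hamem⟩
      simpa using this
    have hb0 : ∑ j, (fderiv ℝ (ψ j) x0 w) • v j = 0 := by
      have := hexp; rw [ha0, zero_add] at this; exact this
    have hc0 : ∀ j, fderiv ℝ (ψ j) x0 w = 0 :=
      Fintype.linearIndependent_iff.mp hli _ hb0
    have hwperp : w ∈ Wᗮ := by
      rw [hW]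
      intro z hz
      induction hz using Submodule.span_induction with
      | mem z hzmem =>
          obtain ⟨j, rfl⟩ := hzmem
          have := hc0 j
          rw [hfd_v j, InnerProductSpace.toDual_apply_apply] at this
          exact this
      | zero => simp
      | add a bb _ _ ha hb => rw [inner_add_left, ha, hb, add_zero]
      | smul c a _ ha => rw [real_inner_smul_left, ha, mul_zero]
    have hPw : P w = 0 := by
      rw [hP]
      exact Submodule.orthogonalProjectionOnto_apply_of_mem_orthogonal hwperp
    have : w = 0 := by
      have := ha0
      rw [hPw] at this
      simpa using this
    exact this
  -- invertible derivative
  have hbij : Function.Bijective T0 := by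
    have h1 : Function.Injective (T0 : E →ₗ[ℝ] E) := hTinj
    exact ⟨h1, LinearMap.injective_iff_surjective.mp h1⟩
  set T : E ≃L[ℝ] E :=
    LinearEquiv.toContinuousLinearEquiv (LinearEquiv.ofBijective (T0 : E →ₗ[ℝ] E) hbij) with hT
  have hTcoe : (T : E →L[ℝ] E) = T0 := by
    ext u; rfl
  -- smoothness of G
  have hGsm : ContDiffOn ℝ 1 G U := by
    rw [hG]
    refine ContDiffOn.add ?_ ?_
    · rw [hLfun]; exact L.contDiff.contDiffOn
    · exact ContDiffOn.sum fun j _ => (hψ j).smul contDiffOn_const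
  have hGc : ContDiffAt ℝ 1 G x0 := hGsm.contDiffAt (hU.mem_nhds hx0)
  have hG' : HasFDerivAt G (T : E →L[ℝ] E) x0 := by rw [hTcoe]; exact hGT
  -- inverse function theorem
  set H := hGc.toOpenPartialHomeomorph G hG' one_ne_zero with hH
  have hHcoe : ⇑H = G := hGc.toOpenPartialHomeomorph_coe hG' one_ne_zero
  have hsrc : x0 ∈ H.source := hGc.mem_toOpenPartialHomeomorph_source hG' one_ne_zero
  have htgt : G x0 ∈ H.target := hGc.image_mem_toOpenPartialHomeomorph_target hG' one_ne_zero
  have hinv : ContDiffAt ℝ 1 (⇑H.symm) (G x0) := by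
    have h1 := hGc.to_localInverse hG' one_ne_zero
    have h2 : hGc.localInverse hG' one_ne_zero = ⇑H.symm :=
      HasStrictFDerivAt.localInverse_def _
    rwa [h2] at h1
  obtain ⟨uS, huS, hcd⟩ := hinv.contDiffOn le_rfl (by simp)
  set V := interior uS with hV
  have hdiffinv : ∀ y ∈ V, DifferentiableAt ℝ (⇑H.symm) y := fun y hy =>
    ((hcd.differentiableOn one_ne_zero) y (interior_subset hy)).differentiableAt
      (mem_interior_iff_mem_nhds.mp hy)
  -- the target neighborhood
  set t : Set (EuclideanSpace ℝ (Fin n)) := (H.target ∩ ⇑H.symm ⁻¹' U) ∩ V with htdef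
  have htopen : IsOpen t :=
    (H.continuousOn_symm.isOpen_inter_preimage H.open_target hU).inter isOpen_interior
  have hsymm_x0 : H.symm (G x0) = x0 := by
    have := H.left_inv hsrc
    rwa [hHcoe] at this
  have hy0t : G x0 ∈ t := by
    refine ⟨⟨htgt, ?_⟩, ?_⟩
    · rw [mem_preimage, hsymm_x0]; exact hx0
    · exact mem_interior_iff_mem_nhds.mpr huS
  obtain ⟨ρ, hρ, hball⟩ := Metric.isOpen_iff.mp htopen _ hy0t
  -- the neighborhood U'
  refine ⟨(U ∩ H.source) ∩ G ⁻¹' (ball (G x0) ρ), ?_, ?_, ?_, ?_⟩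
  · exact ContinuousOn.isOpen_inter_preimage (hGsm.continuousOn.mono inter_subset_left)
      (hU.inter H.open_source) isOpen_ball
  · refine ⟨⟨hx0, hsrc⟩, ?_⟩
    show G x0 ∈ ball (G x0) ρ
    exact mem_ball_self hρ
  · exact fun x hx => hx.1.1
  rintro x ⟨⟨hxU, hxsrc⟩, hxball⟩ hψx i
  rw [Set.mem_preimage] at hxball
  -- the segment from G x0 to G x
  set y : EuclideanSpace ℝ (Fin n) := G x with hy
  have hvℓ : ∀ j, ℓ j (y - G x0) = 0 := by
    intro j
    rw [map_sub, hℓG, hℓG, hψx j, hψ0 j, sub_zero]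
  set γ : ℝ → EuclideanSpace ℝ (Fin n) := fun s => AffineMap.lineMap (G x0) y s with hγ
  set S : Set ℝ := γ ⁻¹' (ball (G x0) ρ) with hSdef
  have hSconv : Convex ℝ S := (convex_ball _ _).affine_preimage (AffineMap.lineMap (G x0) y)
  have hS0 : (0:ℝ) ∈ S := by
    show γ 0 ∈ ball (G x0) ρ
    rw [hγ]
    simp only [AffineMap.lineMap_apply_zero]
    exact mem_ball_self hρ
  have hS1 : (1:ℝ) ∈ S := by
    show γ 1 ∈ ball (G x0) ρ
    rw [hγ]
    simp only [AffineMap.lineMap_apply_one]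
    exact hxball
  set q : ℝ → ℝ := fun s => φ i (H.symm (γ s)) with hq
  have hqderiv : ∀ s ∈ S, HasDerivWithinAt q 0 S s := by
    intro s hs
    have hzt : γ s ∈ t := hball hs
    obtain ⟨⟨hztgt, hzU⟩, hzV⟩ := hzt
    rw [Set.mem_preimage] at hzU
    set z := γ s with hz
    set x' := H.symm z with hx'
    set B := fderiv ℝ (⇑H.symm) z with hB
    have hBd : HasFDerivAt (⇑H.symm) B z := (hdiffinv z hzV).hasFDerivAt
    -- composed derivatives of ψ j ∘ H.symm are the linear functionals ℓ j
    have hD : ∀ j, (fderiv ℝ (ψ j) x').comp B = ℓ j := by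
      intro j
      have h1 : HasFDerivAt (ψ j ∘ ⇑H.symm) ((fderiv ℝ (ψ j) x').comp B) z :=
        (hdψ j x' hzU).comp z hBd
      have heq : ψ j ∘ ⇑H.symm =ᶠ[nhds z] ⇑(ℓ j) := by
        filter_upwards [H.open_target.mem_nhds hztgt] with y' hy'
        have hRI : G (H.symm y') = y' := by
          have := H.right_inv hy'
          rwa [hHcoe] at this
        show ψ j (H.symm y') = ℓ j y'
        exact (hℓG j (H.symm y')).symm.trans (by rw [hRI])
      have h2 : HasFDerivAt (ψ j ∘ ⇑H.symm) (ℓ j) z :=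
        (ℓ j).hasFDerivAt.congr_of_eventuallyEq heq
      exact h1.unique h2
    obtain ⟨c, hc⟩ := hrep x' hzU i
    have hcomp : HasFDerivAt (φ i ∘ ⇑H.symm) ((fderiv ℝ (φ i) x').comp B) z :=
      (hdφ i x' hzU).comp z hBd
    have hline : HasDerivAt γ (y - G x0) s := by
      have hfun : γ = fun s : ℝ => s • (y - G x0) + G x0 := by
        funext s
        rw [hγ]
        simp only [AffineMap.lineMap_apply, vsub_eq_sub, vadd_eq_add]
        try abel
      rw [hfun]
      simpa using ((hasDerivAt_id s).smul_const (y - G x0)).add_const (G x0)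
    have hqd : HasDerivAt q (((fderiv ℝ (φ i) x').comp B) (y - G x0)) s :=
      HasFDerivAt.comp_hasDerivAt (l := φ i ∘ ⇑H.symm) (f := γ) s hcomp hline
    have hzero : ((fderiv ℝ (φ i) x').comp B) (y - G x0) = 0 := by
      rw [ContinuousLinearMap.comp_apply, hc]
      simp only [ContinuousLinearMap.sum_apply, ContinuousLinearMap.smul_apply, smul_eq_mul]
      refine Finset.sum_eq_zero fun j _ => ?_
      rw [← ContinuousLinearMap.comp_apply, hD j, hvℓ j, mul_zero]
    rw [hzero] at hqd
    exact hqd.hasDerivWithinAt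
  have hdist := hSconv.norm_image_sub_le_of_norm_hasDerivWithin_le hqderiv
    (C := 0) (fun s _ => by simp) hS0 hS1
  have hq10 : q 1 = q 0 := by
    have : ‖q 1 - q 0‖ ≤ 0 := by simpa using hdist
    have := le_antisymm this (norm_nonneg _)
    rwa [norm_eq_zero, sub_eq_zero] at this
  have hq1 : q 1 = φ i x := by
    show φ i (H.symm (γ 1)) = φ i x
    have : γ 1 = y := by rw [hγ]; simp [AffineMap.lineMap_apply_one]
    rw [this, hy]
    have : H.symm (G x) = x := by
      have := H.left_inv hxsrc
      rwa [hHcoe] at this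
    rw [this]
  have hq0 : q 0 = 0 := by
    show φ i (H.symm (γ 0)) = 0
    have : γ 0 = G x0 := by rw [hγ]; simp [AffineMap.lineMap_apply_zero]
    rw [this, hsymm_x0, hφ0]
  rw [← hq1, hq10, hq0]



set_option maxHeartbeats 1000000 in
/-- Lemma 3.3 of the paper. For a continuous `g` on an open set `U` with C¹
selection functions `gs 0, …, gs (k-1)`, under Assumption A1 (all selection functions active
at `x⁰`; essentially active set equals active set on `U`; constant affine dimension of the
affine span of the gradients on `U`), and given indices `idx : Fin (d+1) → Fin k` whose
gradients at `x⁰` are affinely independent (hence an affine basis of the affine span of all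
gradients at `x⁰`), there is an open neighborhood `U' ⊆ U` of `x⁰` on which
`gs i x - gs 0 x = 0` for all `i` iff `gs (idx j) x - gs (idx 0) x = 0` for all `j`;
in particular `Ω^{1,…,k} ∩ U'` is the corresponding level set. -/
theorem stmt3 {n k : ℕ} (hk : 0 < k)
    (U : Set (EuclideanSpace ℝ (Fin n))) (hU : IsOpen U)
    (x0 : EuclideanSpace ℝ (Fin n)) (hx0 : x0 ∈ U)
    (g : EuclideanSpace ℝ (Fin n) → ℝ) (hg : ContinuousOn g U)
    (gs : Fin k → EuclideanSpace ℝ (Fin n) → ℝ)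
    (hgs : ∀ i, ContDiffOn ℝ 1 (gs i) U)
    (hsel : ∀ x ∈ U, ∃ i, g x = gs i x)
    -- A1 (i)
    (hA1i : ∀ i, gs i x0 = g x0)
    -- A1 (ii): essentially active set = active set on U
    (hA1ii : ∀ x ∈ U,
      {i | x ∈ closure (interior {y | y ∈ U ∧ g y = gs i y})} = {i | g x = gs i x})
    -- A1 (iii): constant affine dimension d of the affine hull of the gradients on U
    (d : ℕ)
    (hd : d = Module.finrank ℝ
      (affineSpan ℝ (Set.range fun i => gradient (gs i) x0)).direction)
    (hA1iii : ∀ x ∈ U,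
      Module.finrank ℝ (affineSpan ℝ (Set.range fun i => gradient (gs i) x)).direction = d)
    -- affine basis indices
    (idx : Fin (d + 1) → Fin k)
    (hidx : AffineIndependent ℝ (fun j => gradient (gs (idx j)) x0)) :
    ∃ U' : Set (EuclideanSpace ℝ (Fin n)), IsOpen U' ∧ x0 ∈ U' ∧ U' ⊆ U ∧
      (∀ x ∈ U',
        ((∀ i, gs i x - gs ⟨0, hk⟩ x = 0) ↔ (∀ j, gs (idx j) x - gs (idx 0) x = 0))) ∧
      {x ∈ U' | {i | x ∈ closure (interior {y | y ∈ U ∧ g y = gs i y})} = Set.univ}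
        = {x ∈ U' | ∀ j, gs (idx j) x - gs (idx 0) x = 0} := by
  classical
  -- basic differentiability
  have hdiffat : ∀ i, ∀ x ∈ U, DifferentiableAt ℝ (gs i) x := fun i x hx =>
    ((hgs i).differentiableOn one_ne_zero).differentiableAt (hU.mem_nhds hx)
  have hgradsub : ∀ (i i' : Fin k), ∀ x ∈ U,
      gradient (fun w => gs i w - gs i' w) x = gradient (gs i) x - gradient (gs i') x := by
    intro i i' x hx
    apply (InnerProductSpace.toDual ℝ (EuclideanSpace ℝ (Fin n))).injective
    rw [toDual_gradient', map_sub, toDual_gradient', toDual_gradient',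
      fderiv_fun_sub (hdiffat i x hx) (hdiffat i' x hx)]
  have hgradcont : ∀ i : Fin k,
      ContinuousOn (fun x => gradient (gs i) x) U := by
    intro i
    have h1 := (hgs i).continuousOn_fderiv_of_isOpen hU le_rfl
    exact (InnerProductSpace.toDual ℝ
      (EuclideanSpace ℝ (Fin n))).symm.continuous.comp_continuousOn h1
  -- linear independence at x0
  have hli0 : LinearIndependent ℝ
      (fun j : Fin d => gradient (gs (idx j.succ)) x0 - gradient (gs (idx 0)) x0) := by
    have h1 := (affineIndependent_iff_linearIndependent_vsub ℝ
      (fun j => gradient (gs (idx j)) x0) 0).mp hidx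
    have he : Function.Injective (fun j : Fin d =>
        (⟨j.succ, Fin.succ_ne_zero j⟩ : {x : Fin (d+1) // x ≠ 0})) := by
      intro a b hab
      exact Fin.succ_injective _ (by simpa [Subtype.ext_iff] using hab)
    have h2 := h1.comp _ he
    have h3 : (fun j : Fin d => gradient (gs (idx j.succ)) x0 - gradient (gs (idx 0)) x0) =
        (fun i : {x : Fin (d+1) // x ≠ 0} =>
          gradient (gs (idx ↑i)) x0 -ᵥ gradient (gs (idx 0)) x0) ∘
        (fun j : Fin d => (⟨j.succ, Fin.succ_ne_zero j⟩ : {x : Fin (d+1) // x ≠ 0})) := by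
      funext j
      simp [vsub_eq_sub]
    rw [h3]
    exact h2
  -- the open set where the chosen gradient differences are independent
  set N0 : Set (EuclideanSpace ℝ (Fin n)) := U ∩ (fun x => fun j : Fin d =>
      gradient (gs (idx j.succ)) x - gradient (gs (idx 0)) x) ⁻¹'
      {f | LinearIndependent ℝ f} with hN0def
  have hN0open : IsOpen N0 := by
    refine ContinuousOn.isOpen_inter_preimage ?_ hU isOpen_setOf_linearIndependent
    exact continuousOn_pi.mpr fun j => (hgradcont _).sub (hgradcont _)
  have hx0N0 : x0 ∈ N0 := ⟨hx0, hli0⟩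
  have hN0U : N0 ⊆ U := inter_subset_left
  -- span fact on N0
  have hspan : ∀ x ∈ N0, ∀ i : Fin k, gradient (gs i) x - gradient (gs (idx 0)) x ∈
      Submodule.span ℝ (Set.range fun j : Fin d =>
        gradient (gs (idx j.succ)) x - gradient (gs (idx 0)) x) := by
    rintro x ⟨hxU, hxli⟩ i
    set Dx := (affineSpan ℝ (Set.range fun i => gradient (gs i) x)).direction with hDx
    have hmemA : ∀ i : Fin k, gradient (gs i) x ∈
        affineSpan ℝ (Set.range fun i => gradient (gs i) x) := fun i =>
      subset_affineSpan _ _ (mem_range_self i)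
    have hle : Submodule.span ℝ (Set.range fun j : Fin d =>
        gradient (gs (idx j.succ)) x - gradient (gs (idx 0)) x) ≤ Dx := by
      rw [Submodule.span_le]
      rintro _ ⟨j, rfl⟩
      exact AffineSubspace.vsub_mem_direction (hmemA (idx j.succ)) (hmemA (idx 0))
    have hxli' : LinearIndependent ℝ (fun j : Fin d =>
        gradient (gs (idx j.succ)) x - gradient (gs (idx 0)) x) := hxli
    have hfr1 : Module.finrank ℝ (Submodule.span ℝ (Set.range fun j : Fin d =>
        gradient (gs (idx j.succ)) x - gradient (gs (idx 0)) x)) = d := by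
      rw [finrank_span_eq_card hxli']
      simp
    have heq : Submodule.span ℝ (Set.range fun j : Fin d =>
        gradient (gs (idx j.succ)) x - gradient (gs (idx 0)) x) = Dx := by
      apply Submodule.eq_of_le_of_finrank_le hle
      rw [hfr1, hDx, hA1iii x hxU]
    rw [heq]
    exact AffineSubspace.vsub_mem_direction (hmemA i) (hmemA (idx 0))
  -- apply the key lemma on N0
  obtain ⟨U', hU'open, hx0U', hU'N0, hmain⟩ :=
    key hN0open hx0N0
      (φ := fun i : Fin k => fun w => gs i w - gs (idx 0) w)
      (ψ := fun j : Fin d => fun w => gs (idx j.succ) w - gs (idx 0) w)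
      (fun i => (((hgs i).sub (hgs (idx 0))).mono hN0U))
      (fun j => (((hgs (idx j.succ)).sub (hgs (idx 0))).mono hN0U))
      (fun i => by show gs i x0 - gs (idx 0) x0 = 0; rw [hA1i i, hA1i (idx 0), sub_self])
      (fun j => by
        show gs (idx j.succ) x0 - gs (idx 0) x0 = 0
        rw [hA1i (idx j.succ), hA1i (idx 0), sub_self])
      (by
        intro x hx i
        have hxU := hN0U hx
        have e1 : gradient (fun w => gs i w - gs (idx 0) w) x =
            gradient (gs i) x - gradient (gs (idx 0)) x := hgradsub _ _ x hxU
        have e2 : (fun j : Fin d => gradient (fun w => gs (idx j.succ) w - gs (idx 0) w) x) =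
            fun j : Fin d => gradient (gs (idx j.succ)) x - gradient (gs (idx 0)) x :=
          funext fun j => hgradsub _ _ x hxU
        rw [e1, e2]
        exact hspan x hx i)
      (by
        have e2 : (fun j : Fin d => gradient (fun w => gs (idx j.succ) w - gs (idx 0) w) x0) =
            fun j : Fin d => gradient (gs (idx j.succ)) x0 - gradient (gs (idx 0)) x0 :=
          funext fun j => hgradsub _ _ x0 hx0
        rw [e2]
        exact hli0)
  have hU'U : U' ⊆ U := fun x hx => hN0U (hU'N0 hx)
  have hmain' : ∀ x ∈ U', (∀ j : Fin (d+1), gs (idx j) x - gs (idx 0) x = 0) →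
      ∀ i, gs i x - gs (idx 0) x = 0 := by
    intro x hx hj i
    exact hmain x hx (fun j => hj j.succ) i
  refine ⟨U', hU'open, hx0U', hU'U, ?_, ?_⟩
  · intro x hx
    constructor
    · intro hall j
      have h1 := hall (idx j)
      have h2 := hall (idx 0)
      linarith
    · intro hj i
      have h1 := hmain' x hx hj i
      have h2 := hmain' x hx hj ⟨0, hk⟩
      linarith
  · ext x
    simp only [Set.mem_setOf_eq]
    constructor
    · rintro ⟨hxU', hset⟩
      refine ⟨hxU', ?_⟩
      rw [hA1ii x (hU'U hxU')] at hset
      have hall : ∀ i, g x = gs i x := fun i => by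
        have : i ∈ ({i | g x = gs i x} : Set (Fin k)) := hset ▸ Set.mem_univ i
        exact this
      intro j
      rw [← hall (idx j), ← hall (idx 0), sub_self]
    · rintro ⟨hxU', hj⟩
      refine ⟨hxU', ?_⟩
      rw [hA1ii x (hU'U hxU'), Set.eq_univ_iff_forall]
      intro i
      have hall := hmain' x hxU' hj
      obtain ⟨i', hi'⟩ := hsel x (hU'U hxU')
      have e1 := hall i'
      have e2 := hall i
      show g x = gs i x
      linarith


end Aux
end

section
/- Let v, w₁, …, w_k ∈ ℝⁿ. Assume 0 ∈ convexHull({v, w₁, …, w_k}) and 0 ∉ convexHull({w₁, …, w_k}). Let r be the affine dimension of affineSpan({v, w₁, …, w_k}). Then there exist indices i₁, …, i_r ∈ {1,…,k} such that 0 ∈ convexHull({v, w_{i₁}, …, w_{i_r}}) and the set {v, w_{i₁}, …, w_{i_r}} (consisting of r+1 points) is affinely independent. -/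
/-- Lemma 3.5 (Carathéodory-type reduction). If `0 ∈ conv({v, w₁,…,w_k})`
but `0 ∉ conv({w₁,…,w_k})`, and `r` is the affine dimension of `aff({v, w₁,…,w_k})`, then
there are indices `i₁,…,i_r` with `0 ∈ conv({v, w_{i₁},…,w_{i_r}})` and
`{v, w_{i₁},…,w_{i_r}}` affinely independent. -/
theorem stmt4 {n k : ℕ} (v : EuclideanSpace ℝ (Fin n))
    (w : Fin k → EuclideanSpace ℝ (Fin n))
    (h0 : (0 : EuclideanSpace ℝ (Fin n)) ∈ convexHull ℝ (insert v (Set.range w)))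
    (h0g : (0 : EuclideanSpace ℝ (Fin n)) ∉ convexHull ℝ (Set.range w))
    (r : ℕ)
    (hr : r = Module.finrank ℝ (affineSpan ℝ (insert v (Set.range w))).direction) :
    ∃ idx : Fin r → Fin k,
      (0 : EuclideanSpace ℝ (Fin n)) ∈
        convexHull ℝ (insert v (Set.range fun j => w (idx j))) ∧
      AffineIndependent ℝ
        (Fin.cons v (fun j => w (idx j)) : Fin (r + 1) → EuclideanSpace ℝ (Fin n)) := by
  classical
  set S : Set (EuclideanSpace ℝ (Fin n)) := insert v (Set.range w) with hSdef
  -- Carathéodory: an affinely independent subset T of S with 0 ∈ conv T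
  rw [convexHull_eq_union] at h0
  simp only [Set.mem_iUnion] at h0
  obtain ⟨T, hTS, hTai, h0T⟩ := h0
  -- v must belong to T
  have hvT : v ∈ (T : Set (EuclideanSpace ℝ (Fin n))) := by
    by_contra hv
    refine h0g (convexHull_mono (fun x hx => ?_) h0T)
    rcases hTS hx with h | h
    · exact absurd (h ▸ hx) hv
    · exact h
  -- translate by v: linear independence
  have hlin := (affineIndependent_set_iff_linearIndependent_vsub ℝ hvT).mp hTai
  set B0 : Set (EuclideanSpace ℝ (Fin n)) :=
    (fun p => p -ᵥ v) '' ((T : Set (EuclideanSpace ℝ (Fin n))) \ {v}) with hB0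
  set X : Set (EuclideanSpace ℝ (Fin n)) := (fun p => p -ᵥ v) '' (S \ {v}) with hX
  have hB0X : B0 ⊆ X := Set.image_mono (Set.diff_subset_diff_left hTS)
  obtain ⟨b, hbX, hB0b, hXspanb, hbli'⟩ := exists_linearIndepOn_id_extension hlin hB0X
  have hbli : LinearIndependent ℝ ((↑) : b → EuclideanSpace ℝ (Fin n)) := hbli'
  have hvS : v ∈ S := Set.mem_insert _ _
  -- span of b is the vector span of S
  have hins : insert v (S \ {v}) = S := by
    rw [Set.insert_diff_singleton]; exact Set.insert_eq_self.mpr hvS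
  have hXspan : Submodule.span ℝ X = vectorSpan ℝ S := by
    rw [vectorSpan_eq_span_vsub_set_right ℝ hvS]
    have himg : (fun p => p -ᵥ v) '' S = insert (0 : EuclideanSpace ℝ (Fin n)) X := by
      rw [← hins, Set.image_insert_eq, vsub_self]
    rw [himg, Submodule.span_insert_zero]
  have hspanb : Submodule.span ℝ b = vectorSpan ℝ S := by
    refine le_antisymm ?_ ?_
    · rw [← hXspan]; exact Submodule.span_mono hbX
    · rw [← hXspan]; exact Submodule.span_le.mpr hXspanb
  -- finiteness and cardinality
  have hSfin : S.Finite := (Set.finite_range w).insert v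
  have hbfin : b.Finite := ((hSfin.diff).image _).subset hbX
  haveI : Fintype b := hbfin.fintype
  have hcardb : b.toFinset.card = r := by
    rw [hr, direction_affineSpan, ← hspanb, finrank_span_set_eq_card hbli]
  have hcard' : Fintype.card b = r := by rw [← Set.toFinset_card, hcardb]
  let e : Fin r ≃ b := (Fintype.equivFinOfCardEq hcard').symm
  -- elements of b come from range w
  have hmem : ∀ j : Fin r, ∃ i : Fin k, w i -ᵥ v = (e j : EuclideanSpace ℝ (Fin n)) := by
    intro j
    obtain ⟨p, hp, hpe⟩ := hbX (e j).2
    rcases hp.1 with h | h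
    · exact absurd h hp.2
    · obtain ⟨i, rfl⟩ := h
      exact ⟨i, hpe⟩
  choose idx hidx using hmem
  have hw : ∀ j : Fin r, w (idx j) = (e j : EuclideanSpace ℝ (Fin n)) +ᵥ v := by
    intro j; rw [← hidx j, vsub_vadd]
  -- b elements are nonzero
  have h0b : ∀ x ∈ b, x ≠ (0 : EuclideanSpace ℝ (Fin n)) := fun x hx => hbli.ne_zero ⟨x, hx⟩
  refine ⟨idx, ?_, ?_⟩
  · -- 0 ∈ conv of the selected points, since T ⊆ insert v (range (w ∘ idx))
    refine convexHull_mono (fun x hx => ?_) h0T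
    by_cases hxv : x = v
    · exact hxv ▸ Set.mem_insert _ _
    · have hxb : x -ᵥ v ∈ b := hB0b ⟨x, ⟨hx, hxv⟩, rfl⟩
      refine Set.mem_insert_of_mem _ ⟨e.symm ⟨x -ᵥ v, hxb⟩, ?_⟩
      have h1 := hidx (e.symm ⟨x -ᵥ v, hxb⟩)
      rw [Equiv.apply_symm_apply] at h1
      show w (idx (e.symm ⟨x -ᵥ v, hxb⟩)) = x
      exact vsub_left_injective v h1
  · -- affine independence
    have hait := (linearIndependent_set_iff_affineIndependent_vadd_union_singleton ℝ h0b v).mp hbli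
    set f : Fin (r + 1) → EuclideanSpace ℝ (Fin n) := Fin.cons v (fun j => w (idx j)) with hf
    have hfinj : Function.Injective f := by
      intro i i' hii'
      rcases Fin.eq_zero_or_eq_succ i with rfl | ⟨i, rfl⟩ <;>
        rcases Fin.eq_zero_or_eq_succ i' with rfl | ⟨i', rfl⟩
      · rfl
      · exfalso
        simp only [hf, Fin.cons_zero, Fin.cons_succ] at hii'
        exact h0b _ (e i').2 (by rw [← hidx i', ← hii', vsub_self])
      · exfalso
        simp only [hf, Fin.cons_zero, Fin.cons_succ] at hii'
        exact h0b _ (e i).2 (by rw [← hidx i, hii', vsub_self])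
      · simp only [hf, Fin.cons_succ, hw] at hii'
        have h2 : (e i : EuclideanSpace ℝ (Fin n)) = e i' := vadd_right_cancel v hii'
        have h3 : e i = e i' := Subtype.ext h2
        rw [e.apply_eq_iff_eq] at h3
        rw [h3]
    have hrange : Set.range f = {v} ∪ (fun x => x +ᵥ v) '' b := by
      rw [hf, Fin.range_cons]
      congr 1
      ext x
      constructor
      · rintro ⟨j, rfl⟩
        exact ⟨e j, (e j).2, (hw j).symm⟩
      · rintro ⟨y, hy, rfl⟩
        refine ⟨e.symm ⟨y, hy⟩, ?_⟩
        show w (idx (e.symm ⟨y, hy⟩)) = y +ᵥ v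
        rw [hw, Equiv.apply_symm_apply]
    have hra : AffineIndependent ℝ
        ((fun x => (x : EuclideanSpace ℝ (Fin n))) : Set.range f → EuclideanSpace ℝ (Fin n)) :=
      hrange ▸ hait
    exact hra.of_set_of_injective hfinj
end

section
/- Let v, w₁, …, w_l ∈ ℝⁿ. Suppose there exist, for s ∈ {1,2}, real numbers α^s > 0 and vectors β^s ∈ ℝ^l with β^s_j ≥ 0 for all j, α^s + Σ_{j=1}^l β^s_j = 1, α^s·v + Σ_{j=1}^l β^s_j·w_j = 0, and α¹ ≠ α². Then v ∈ affineSpan({w₁, …, w_l}). -/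
/-- Lemma 3.6(a). If there are two distinct KKT multipliers `α¹ ≠ α²` for `v`
in vanishing convex combinations with `w₁,…,w_l`, then `v ∈ aff({w₁,…,w_l})`. -/
theorem stmt5 {n l : ℕ} (v : EuclideanSpace ℝ (Fin n))
    (w : Fin l → EuclideanSpace ℝ (Fin n))
    (α₁ α₂ : ℝ) (β₁ β₂ : Fin l → ℝ)
    (hα₁ : 0 < α₁) (hα₂ : 0 < α₂)
    (hβ₁ : ∀ j, 0 ≤ β₁ j) (hβ₂ : ∀ j, 0 ≤ β₂ j)
    (hsum₁ : α₁ + ∑ j, β₁ j = 1) (hsum₂ : α₂ + ∑ j, β₂ j = 1)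
    (hcomb₁ : α₁ • v + ∑ j, β₁ j • w j = 0)
    (hcomb₂ : α₂ • v + ∑ j, β₂ j • w j = 0)
    (hne : α₁ ≠ α₂) :
    v ∈ affineSpan ℝ (Set.range w) := by
  set c : Fin l → ℝ := fun j => (β₂ j - β₁ j) / (α₁ - α₂) with hc
  have hd : α₁ - α₂ ≠ 0 := sub_ne_zero.mpr hne
  have hcsum : ∑ j, c j = 1 := by
    simp only [hc]
    rw [← Finset.sum_div, Finset.sum_sub_distrib]
    field_simp
    linarith
  have hv : v = ∑ j, c j • w j := by
    have key : (α₁ - α₂) • v = ∑ j, (β₂ j - β₁ j) • w j := by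
      have := sub_eq_zero.mpr (hcomb₁.trans hcomb₂.symm)
      simp only [sub_smul, Finset.sum_sub_distrib] at *
      abel_nf at this ⊢
      linear_combination (norm := module) this
    have : v = (α₁ - α₂)⁻¹ • ((α₁ - α₂) • v) := by
      rw [smul_smul, inv_mul_cancel₀ hd, one_smul]
    rw [this, key, Finset.smul_sum]
    refine Finset.sum_congr rfl fun j _ => ?_
    rw [smul_smul]
    congr 1
    field_simp [hc]
    simp only [hc]
    field_simp
  have hl : l ≠ 0 := by
    rintro rfl
    simp at hcsum
  have : Nonempty (Fin l) := ⟨⟨0, Nat.pos_of_ne_zero hl⟩⟩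
  rw [hv, ← Finset.univ.affineCombination_eq_linear_combination w c hcsum]
  exact affineCombination_mem_affineSpan hcsum w
end

section
/- Let v, w₁, …, w_l ∈ ℝⁿ. Suppose v ∈ affineSpan({w₁, …, w_l}) and 0 lies in the intrinsic (relative) interior of convexHull({v, w₁, …, w_l}). Then there exist, for s ∈ {1,2}, real numbers α^s > 0 and vectors β^s ∈ ℝ^l with β^s_j > 0 for all j, α^s + Σ_{j=1}^l β^s_j = 1, α^s·v + Σ_{j=1}^l β^s_j·w_j = 0, and α¹ ≠ α². -/
variable {n l : ℕ}

lemma hull_mem (v : EuclideanSpace ℝ (Fin n)) (w : Fin l → EuclideanSpace ℝ (Fin n))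
    {a : ℝ} {d : Fin l → ℝ} (ha : 0 ≤ a) (hd : ∀ j, 0 ≤ d j)
    (hsum : a + ∑ j, d j = 1) :
    a • v + ∑ j, d j • w j ∈ convexHull ℝ (insert v (Set.range w)) := by
  rw [← Fin.range_cons v w]
  rw [convexHull_range_eq_exists_affineCombination]
  refine ⟨Finset.univ, Fin.cons a d, ?_, ?_, ?_⟩
  · intro i _; exact Fin.cases ha hd i
  · rw [Fin.sum_univ_succ]; simpa using hsum
  · rw [Finset.affineCombination_eq_linear_combination _ _ _ (by rw [Fin.sum_univ_succ]; simpa using hsum)]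
    rw [Fin.sum_univ_succ]
    simp

lemma hull_rep (v : EuclideanSpace ℝ (Fin n)) (w : Fin l → EuclideanSpace ℝ (Fin n))
    {x : EuclideanSpace ℝ (Fin n)} (hx : x ∈ convexHull ℝ (insert v (Set.range w))) :
    ∃ (a : ℝ) (d : Fin l → ℝ), 0 ≤ a ∧ (∀ j, 0 ≤ d j) ∧ a + ∑ j, d j = 1 ∧
      a • v + ∑ j, d j • w j = x := by
  classical
  rw [← Fin.range_cons v w, convexHull_range_eq_exists_affineCombination] at hx
  obtain ⟨s, W, hW0, hW1, hWx⟩ := hx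
  set D : Fin (l + 1) → ℝ := fun i => if i ∈ s then W i else 0 with hD
  have hD0 : ∀ i, 0 ≤ D i := by
    intro i; by_cases h : i ∈ s <;> simp [hD, h]
    exact hW0 i h
  have hDsum : ∑ i, D i = 1 := by
    rw [← hW1]; rw [Finset.sum_ite_mem, Finset.univ_inter]
  have hDx : ∑ i, D i • (Fin.cons v w : Fin (l+1) → EuclideanSpace ℝ (Fin n)) i = x := by
    rw [← hWx, Finset.affineCombination_eq_linear_combination _ _ _ hW1]
    rw [← Finset.sum_subset s.subset_univ
      (f := fun i => D i • (Fin.cons v w : Fin (l+1) → EuclideanSpace ℝ (Fin n)) i)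
      (fun i _ hi => by simp [hD, hi])]
    exact Finset.sum_congr rfl fun i hi => by simp [hD, hi]
  refine ⟨D 0, fun j => D j.succ, hD0 0, fun j => hD0 _, ?_, ?_⟩
  · rw [← hDsum, Fin.sum_univ_succ]
  · rw [← hDx, Fin.sum_univ_succ]; simp

/-- Lemma 3.6(b). If `v ∈ aff({w₁,…,w_l})` and `0` lies in the relative
(intrinsic) interior of `conv({v, w₁,…,w_l})`, then the KKT multiplier of `v` is not
unique: there are two vanishing strictly positive convex combinations with `α¹ ≠ α²`. -/
theorem stmt6 {n l : ℕ} (v : EuclideanSpace ℝ (Fin n))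
    (w : Fin l → EuclideanSpace ℝ (Fin n))
    (hv : v ∈ affineSpan ℝ (Set.range w))
    (h0 : (0 : EuclideanSpace ℝ (Fin n)) ∈
      intrinsicInterior ℝ (convexHull ℝ (insert v (Set.range w)))) :
    ∃ (α₁ α₂ : ℝ) (β₁ β₂ : Fin l → ℝ),
      0 < α₁ ∧ 0 < α₂ ∧ (∀ j, 0 < β₁ j) ∧ (∀ j, 0 < β₂ j) ∧
      α₁ + ∑ j, β₁ j = 1 ∧ α₂ + ∑ j, β₂ j = 1 ∧
      α₁ • v + ∑ j, β₁ j • w j = 0 ∧ α₂ • v + ∑ j, β₂ j • w j = 0 ∧ α₁ ≠ α₂ := by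
  classical
  set C := convexHull ℝ (insert v (Set.range w)) with hCdef
  -- `l` is positive
  have hl : 0 < l := by
    rcases Nat.eq_zero_or_pos l with h | h
    · exfalso
      subst h
      rw [Set.range_eq_empty, AffineSubspace.span_empty] at hv
      exact AffineSubspace.notMem_bot ℝ _ v hv
    · exact h
  haveI : Nonempty (Fin l) := Fin.pos_iff_nonempty.mp hl
  -- an affine representation of `v`
  obtain ⟨c, hc1, hvc⟩ := eq_affineCombination_of_mem_affineSpan_of_fintype hv
  rw [Finset.affineCombination_eq_linear_combination _ _ _ hc1] at hvc
  -- the barycenter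
  set κ : ℝ := ((l : ℝ) + 1)⁻¹ with hκdef
  have hlpos : (0:ℝ) < (l:ℝ) + 1 := by positivity
  have hκpos : 0 < κ := by positivity
  have hκl : ((l:ℝ) + 1) * κ = 1 := mul_inv_cancel₀ hlpos.ne'
  have hκsum : κ + ∑ _j : Fin l, κ = 1 := by
    rw [Finset.sum_const, Finset.card_univ, Fintype.card_fin, nsmul_eq_mul]
    linarith [hκl]
  set b : EuclideanSpace ℝ (Fin n) := κ • v + ∑ j, κ • w j with hbdef
  have hbC : b ∈ C := hull_mem v w hκpos.le (fun _ => hκpos.le) hκsum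
  have h0C : (0 : EuclideanSpace ℝ (Fin n)) ∈ C := intrinsicInterior_subset h0
  have h0A : (0 : EuclideanSpace ℝ (Fin n)) ∈ affineSpan ℝ C := subset_affineSpan ℝ C h0C
  have hbA : b ∈ affineSpan ℝ C := subset_affineSpan ℝ C hbC
  have hmem : ∀ t : ℝ, (-t) • b ∈ affineSpan ℝ C := fun t => by
    have := AffineSubspace.smul_vsub_vadd_mem (affineSpan ℝ C) (-t) hbA h0A h0A
    simpa using this
  -- find `t > 0` with `(-t) • b ∈ C`
  rw [mem_intrinsicInterior] at h0
  obtain ⟨x, hxint, hx0⟩ := h0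
  set f : ℝ → (affineSpan ℝ C : AffineSubspace ℝ (EuclideanSpace ℝ (Fin n))) :=
    fun t => ⟨(-t) • b, hmem t⟩ with hfdef
  have hfc : Continuous f :=
    Continuous.subtype_mk (continuous_neg.smul continuous_const) _
  have hf0 : f 0 = x := Subtype.ext (by simp [hfdef, hx0])
  have hnb : f ⁻¹' (interior ((↑) ⁻¹' C)) ∈ nhds (0 : ℝ) := by
    apply hfc.continuousAt.preimage_mem_nhds
    rw [hf0]
    exact isOpen_interior.mem_nhds hxint
  have h2 : ∀ᶠ t in nhdsWithin (0:ℝ) (Set.Ioi 0), f t ∈ interior ((↑) ⁻¹' C) :=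
    nhdsWithin_le_nhds hnb
  obtain ⟨t, hft, ht0'⟩ := (h2.and self_mem_nhdsWithin).exists
  have ht0 : 0 < t := ht0'
  have h1t : (0:ℝ) < 1 + t := by linarith
  have hzC : (-t) • b ∈ C := by
    have h := interior_subset hft
    exact h
  obtain ⟨a, d, ha, hd, hsum, hcomb⟩ := hull_rep v w hzC
  -- the first solution
  set α₁ : ℝ := (1+t)⁻¹ * (a + t*κ) with hα₁def
  set β₁ : Fin l → ℝ := fun j => (1+t)⁻¹ * (d j + t*κ) with hβ₁def
  have hα₁pos : 0 < α₁ := by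
    have h2 := mul_pos ht0 hκpos
    have : 0 < a + t*κ := by linarith
    positivity
  have hβ₁pos : ∀ j, 0 < β₁ j := fun j => by
    have h1 := hd j
    have h2 := mul_pos ht0 hκpos
    have : 0 < d j + t*κ := by linarith
    positivity
  have hSd : ∑ j, (d j + t*κ) = (∑ j, d j) + (l:ℝ) * (t*κ) := by
    rw [Finset.sum_add_distrib, Finset.sum_const, Finset.card_univ, Fintype.card_fin,
      nsmul_eq_mul]
  have hnum : (a + t*κ) + ∑ j, (d j + t*κ) = 1 + t := by
    rw [hSd]
    linear_combination hsum + t * hκl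
  have hsum1 : α₁ + ∑ j, β₁ j = 1 := by
    rw [hβ₁def, hα₁def, ← Finset.mul_sum, ← mul_add, hnum, inv_mul_cancel₀ h1t.ne']
  have htb : (t*κ) • v + ∑ j, (t*κ) • w j = t • b := by
    rw [hbdef, smul_add, Finset.smul_sum]
    simp [smul_smul]
  have key : (a + t*κ) • v + ∑ j, (d j + t*κ) • w j = 0 := by
    have hrw : (a + t*κ) • v + ∑ j, (d j + t*κ) • w j
        = (a • v + ∑ j, d j • w j) + ((t*κ) • v + ∑ j, (t*κ) • w j) := by
      simp_rw [add_smul, Finset.sum_add_distrib]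
      abel
    rw [hrw, hcomb, htb, neg_smul, neg_add_cancel]
  have hcombo1 : α₁ • v + ∑ j, β₁ j • w j = 0 := by
    rw [hα₁def, hβ₁def]
    simp_rw [mul_smul]
    rw [← Finset.smul_sum, ← smul_add, key, smul_zero]
  -- the perturbation
  obtain ⟨m, hm, hmle⟩ : ∃ m : ℝ, 0 < m ∧ ∀ j, m ≤ β₁ j :=
    ⟨Finset.univ.inf' Finset.univ_nonempty β₁,
      (Finset.lt_inf'_iff _).mpr fun j _ => hβ₁pos j,
      fun j => Finset.inf'_le _ (Finset.mem_univ j)⟩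
  obtain ⟨M, hM, hcM⟩ : ∃ M : ℝ, 0 < M ∧ ∀ j, |c j| ≤ M := by
    refine ⟨1 + ∑ j, |c j|, ?_, fun j => ?_⟩
    · have : 0 ≤ ∑ j, |c j| := Finset.sum_nonneg fun j _ => abs_nonneg _
      linarith
    · have := Finset.single_le_sum (f := fun j => |c j|) (fun i _ => abs_nonneg _)
        (Finset.mem_univ j)
      linarith
  obtain ⟨ε, hε, hεM⟩ : ∃ ε : ℝ, 0 < ε ∧ ε * M = m / 2 :=
    ⟨m / (2*M), by positivity, by field_simp⟩
  have hβ₂pos : ∀ j, 0 < β₁ j - ε * c j := fun j => by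
    have h1 : ε * c j ≤ ε * |c j| := mul_le_mul_of_nonneg_left (le_abs_self _) hε.le
    have h2 : ε * |c j| ≤ ε * M := mul_le_mul_of_nonneg_left (hcM j) hε.le
    have h4 := hmle j
    have h5 : ε * c j < m := by linarith
    exact sub_pos.mpr (lt_of_lt_of_le h5 h4)
  have hsum2 : (α₁ + ε) + ∑ j, (β₁ j - ε * c j) = 1 := by
    have hεc : ∑ j, ε * c j = ε := by rw [← Finset.mul_sum, hc1, mul_one]
    rw [Finset.sum_sub_distrib, hεc]
    linarith [hsum1]
  have hcombo2 : (α₁ + ε) • v + ∑ j, (β₁ j - ε * c j) • w j = 0 := by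
    have hrw : (α₁ + ε) • v + ∑ j, (β₁ j - ε * c j) • w j
        = (α₁ • v + ∑ j, β₁ j • w j) + ε • (v - ∑ j, c j • w j) := by
      simp_rw [sub_smul, add_smul, Finset.sum_sub_distrib, mul_smul, ← Finset.smul_sum,
        smul_sub]
      abel
    rw [hrw, hcombo1, ← hvc, sub_self, smul_zero, zero_add]
  exact ⟨α₁, α₁ + ε, β₁, fun j => β₁ j - ε * c j, hα₁pos, by linarith, hβ₁pos, hβ₂pos,
    hsum1, hsum2, hcombo1, hcombo2, by linarith⟩
end

section
/- Let v, w₁, …, w_k ∈ ℝⁿ. Suppose there exist indices i₁, …, i_r ∈ {1,…,k} such that {v, w_{i₁}, …, w_{i_r}} is affinely independent, affineSpan({v, w_{i₁}, …, w_{i_r}}) = affineSpan({v, w₁, …, w_k}), and there exist α⁰ > 0 and β⁰ ∈ ℝ^r with β⁰_j > 0 for all j, α⁰ + Σ_{j=1}^r β⁰_j = 1 and α⁰·v + Σ_{j=1}^r β⁰_j·w_{i_j} = 0. Then 0 lies in the intrinsic (relative) interior of convexHull({v, w₁, …, w_k}). -/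
/-- Lemma 3.9. If there is an affinely independent subfamily
`{v, w_{i₁},…,w_{i_r}}` spanning the same affine hull as `{v, w₁,…,w_k}` and admitting a
vanishing convex combination with strictly positive coefficients, then
`0 ∈ ri(conv({v, w₁,…,w_k}))`. -/
theorem stmt7 {n k r : ℕ} (v : EuclideanSpace ℝ (Fin n))
    (w : Fin k → EuclideanSpace ℝ (Fin n))
    (idx : Fin r → Fin k)
    (hind : AffineIndependent ℝ
      (Fin.cons v (fun j => w (idx j)) : Fin (r + 1) → EuclideanSpace ℝ (Fin n)))
    (hspan : affineSpan ℝ (insert v (Set.range fun j => w (idx j)))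
      = affineSpan ℝ (insert v (Set.range w)))
    (α₀ : ℝ) (β₀ : Fin r → ℝ) (hα₀ : 0 < α₀) (hβ₀ : ∀ j, 0 < β₀ j)
    (hsum : α₀ + ∑ j, β₀ j = 1)
    (hcomb : α₀ • v + ∑ j, β₀ j • w (idx j) = 0) :
    (0 : EuclideanSpace ℝ (Fin n)) ∈
      intrinsicInterior ℝ (convexHull ℝ (insert v (Set.range w))) := by
  classical
  set T : Set (EuclideanSpace ℝ (Fin n)) := insert v (Set.range w) with hTdef
  set p : Fin (r+1) → EuclideanSpace ℝ (Fin n) := Fin.cons v (fun j => w (idx j)) with hpdef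
  set wts : Fin (r+1) → ℝ := Fin.cons α₀ β₀ with hwdef
  have hwsum : ∑ i, wts i = 1 := by rw [hwdef, Fin.sum_cons]; exact hsum
  have hwpos : ∀ i, 0 < wts i := by
    refine Fin.cases ?_ ?_ <;> simp [hwdef, hα₀, hβ₀]
  have hlin : ∑ i, wts i • p i = 0 := by
    rw [Fin.sum_univ_succ]
    simpa [hwdef, hpdef] using hcomb
  have hcombo : Finset.univ.affineCombination ℝ p wts = 0 := by
    rw [Finset.affineCombination_eq_linear_combination _ _ _ hwsum, hlin]
  have hrangep : Set.range p = insert v (Set.range fun j => w (idx j)) := by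
    rw [hpdef, Fin.range_cons]
  have hpT : ∀ i, p i ∈ T := by
    refine Fin.cases ?_ ?_
    · exact Set.mem_insert _ _
    · intro j; exact Set.mem_insert_of_mem _ ⟨idx j, rfl⟩
  have h0span : (0 : EuclideanSpace ℝ (Fin n)) ∈ affineSpan ℝ T := by
    rw [← hcombo, hTdef, ← hspan, ← hrangep]
    exact affineCombination_mem_affineSpan hwsum p
  set E : Submodule ℝ (EuclideanSpace ℝ (Fin n)) := Submodule.span ℝ T with hEdef
  have hTE : T ⊆ (E : Set (EuclideanSpace ℝ (Fin n))) := Submodule.subset_span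
  have hE : (affineSpan ℝ T : Set (EuclideanSpace ℝ (Fin n)))
      = (E : Set (EuclideanSpace ℝ (Fin n))) := by
    rw [← affineSpan_insert_eq_affineSpan (k := ℝ) h0span, affineSpan_insert_zero]
  set q : Fin (r+1) → E := fun i => ⟨p i, hTE (hpT i)⟩ with hqdef
  have hcomp : (E.subtype.toAffineMap ∘ q) = p := rfl
  have hindq : AffineIndependent ℝ q :=
    AffineIndependent.of_comp E.subtype.toAffineMap (by rw [hcomp]; exact hind)
  have hspanq : affineSpan ℝ (Set.range q) = ⊤ := by
    have hmap : (affineSpan ℝ (Set.range q)).map E.subtype.toAffineMap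
        = affineSpan ℝ T := by
      rw [AffineSubspace.map_span, ← Set.range_comp, hcomp, hrangep]
      exact hspan
    have hinj : Function.Injective E.subtype.toAffineMap := Subtype.val_injective
    have htopmap : (⊤ : AffineSubspace ℝ E).map E.subtype.toAffineMap
        = affineSpan ℝ T := by
      apply AffineSubspace.coe_injective
      rw [AffineSubspace.coe_map, hE]
      simp
    have heq := hmap.trans htopmap.symm
    ext x
    constructor
    · intro _; trivial
    · intro _
      have hx : E.subtype.toAffineMap x ∈ (⊤ : AffineSubspace ℝ E).map E.subtype.toAffineMap :=
        ⟨x, trivial, rfl⟩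
      rw [← heq] at hx
      obtain ⟨y, hy, hxy⟩ := hx
      rwa [← hinj hxy]
  let b : AffineBasis (Fin (r+1)) ℝ E := ⟨q, hindq, hspanq⟩
  have h0E : (0 : EuclideanSpace ℝ (Fin n)) ∈ E := E.zero_mem
  have hcomboE : Finset.univ.affineCombination ℝ (⇑b) wts = (⟨0, h0E⟩ : E) := by
    apply Subtype.ext
    rw [Finset.affineCombination_eq_linear_combination _ _ _ hwsum]
    push_cast
    exact hlin
  have hcoord : ∀ i, 0 < b.coord i ⟨0, h0E⟩ := by
    intro i
    have hc := b.coord_apply_combination_of_mem (Finset.mem_univ i) hwsum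
    rw [hcomboE] at hc
    rw [hc]
    exact hwpos i
  have hint : (⟨0, h0E⟩ : E) ∈ interior (convexHull ℝ (Set.range q)) := by
    have hrq : Set.range q = Set.range b := rfl
    rw [hrq, b.interior_convexHull]
    exact hcoord
  set s' : Set E := Subtype.val ⁻¹' T with hs'def
  have hqs' : Set.range q ⊆ s' := by rintro _ ⟨i, rfl⟩; exact hpT i
  have hri : (⟨0, h0E⟩ : E) ∈ intrinsicInterior ℝ (convexHull ℝ s') :=
    interior_subset_intrinsicInterior (interior_mono (convexHull_mono hqs') hint)
  set φ : E →ᵃⁱ[ℝ] EuclideanSpace ℝ (Fin n) := E.subtypeₗᵢ.toAffineIsometry with hφ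
  have himg : φ '' convexHull ℝ s' = convexHull ℝ T := by
    have h1 : (⇑φ) = ⇑(φ.toAffineMap) := rfl
    rw [h1, AffineMap.image_convexHull]
    congr 1
    have h2 : ⇑(φ.toAffineMap) '' s' = Subtype.val '' (Subtype.val ⁻¹' T) := rfl
    rw [h2, Set.image_preimage_eq_of_subset]
    rw [Subtype.range_coe]
    exact hTE
  have hii := φ.image_intrinsicInterior (convexHull ℝ s')
  rw [himg] at hii
  rw [hii]
  exact ⟨⟨0, h0E⟩, hri, rfl⟩
end

section
/- Let f : ℝⁿ → ℝ be C¹, let g : ℝⁿ → ℝ be continuous with C¹ selection functions g₁, …, g_k : ℝⁿ → ℝ (so g(x) ∈ {g₁(x),…,g_k(x)} for all x), and define the Pareto critical set P_c := {x ∈ ℝⁿ : 0 ∈ convexHull({∇f(x)} ∪ {∇g_i(x) : i ∈ I^e(x)})}. Let x⁰ ∈ P_c with I^e(x⁰) = {i₁, …, i_l}. Suppose that every open neighborhood U of x⁰ contains a point x ∈ P_c ∩ U with I^e(x) ≠ I^e(x⁰). Then there exist α ≥ 0 and β ∈ ℝ^l with β_j ≥ 0 for all j, α + Σ_{j=1}^l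 β_j = 1, α∇f(x⁰) + Σ_{j=1}^l β_j ∇g_{i_j}(x⁰) = 0, and β_j = 0 for at least one j ∈ {1,…,l}. -/
open Set Finset Filter Topology

lemma aux_weights {E : Type*} [AddCommGroup E] [Module ℝ E] {ι : Type} [Fintype ι]
    (s : Set ι) (v : ι → E) (a : E)
    (h : (0:E) ∈ convexHull ℝ (insert a (v '' s))) :
    ∃ w : Option ι → ℝ, (∀ c, 0 ≤ w c) ∧ ∑ c, w c = 1 ∧
      (∀ j, j ∉ s → w (some j) = 0) ∧
      w none • a + ∑ j, w (some j) • v j = 0 := by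
  classical
  rw [mem_convexHull_iff_exists_fintype] at h
  obtain ⟨ι', _, w, z, hw0, hw1, hz, hzsum⟩ := h
  set V : Option ι → E := fun c => c.elim a v with hV
  have hex : ∀ i : ι', ∃ c : Option ι, V c = z i ∧ ∀ j, c = some j → j ∈ s := by
    intro i
    rcases hz i with h1 | h2
    · exact ⟨none, h1.symm, by simp⟩
    · obtain ⟨j, hj, hjz⟩ := h2
      exact ⟨some j, hjz, by rintro j' hj'; cases hj'; exact hj⟩
  choose τ hτ1 hτ2 using hex
  refine ⟨fun c => ∑ i ∈ Finset.univ.filter (τ · = c), w i, ?_, ?_, ?_, ?_⟩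
  · intro c; exact Finset.sum_nonneg fun i _ => hw0 i
  · rw [Finset.sum_fiberwise_of_maps_to (fun x _ => Finset.mem_univ _) w]; exact hw1
  · intro j hj
    apply Finset.sum_eq_zero
    intro i hi
    simp only [Finset.mem_filter] at hi
    exact absurd (hτ2 i j hi.2) hj
  · have key : ∑ c : Option ι, (∑ i ∈ Finset.univ.filter (τ · = c), w i) • V c = 0 := by
      have : ∀ c : Option ι, (∑ i ∈ Finset.univ.filter (τ · = c), w i) • V c
          = ∑ i ∈ Finset.univ.filter (τ · = c), w i • z i := by
        intro c
        rw [Finset.sum_smul]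
        apply Finset.sum_congr rfl
        intro i hi
        simp only [Finset.mem_filter] at hi
        rw [← hi.2, hτ1 i]
      rw [Finset.sum_congr rfl fun c _ => this c,
        Finset.sum_fiberwise_of_maps_to (fun x _ => Finset.mem_univ _) (fun i => w i • z i)]
      exact hzsum
    rw [Fintype.sum_option] at key
    simpa [hV] using key

/-- Lemma 3.13 of the paper. At a Pareto critical point `x⁰` with essentially
active set `{i₁,…,i_l}` that is approached by Pareto critical points with a different
essentially active set, there is a vanishing convex combination
`α∇f(x⁰) + Σ_j β_j ∇g_{i_j}(x⁰) = 0` with `α + Σ_j β_j = 1`, `α, β ≥ 0` and `β_j = 0`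
for at least one `j`. -/
theorem stmt10 {n k l : ℕ}
    (f : EuclideanSpace ℝ (Fin n) → ℝ) (hf : ContDiff ℝ 1 f)
    (g : EuclideanSpace ℝ (Fin n) → ℝ) (hg : Continuous g)
    (gs : Fin k → EuclideanSpace ℝ (Fin n) → ℝ) (hgs : ∀ i, ContDiff ℝ 1 (gs i))
    (hsel : ∀ x, ∃ i, g x = gs i x)
    (Pc : Set (EuclideanSpace ℝ (Fin n)))
    (hPc : Pc = {x | (0 : EuclideanSpace ℝ (Fin n)) ∈ convexHull ℝ
      (insert (gradient f x)
        ((fun i => gradient (gs i) x) '' {i | x ∈ closure (interior {y | g y = gs i y})}))})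
    (x0 : EuclideanSpace ℝ (Fin n)) (hx0 : x0 ∈ Pc)
    (idx : Fin l → Fin k) (hinj : Function.Injective idx)
    (hIe : {i | x0 ∈ closure (interior {y | g y = gs i y})} = Set.range idx)
    (hacc : ∀ U : Set (EuclideanSpace ℝ (Fin n)), IsOpen U → x0 ∈ U →
      ∃ x ∈ Pc ∩ U, {i | x ∈ closure (interior {y | g y = gs i y})}
        ≠ {i | x0 ∈ closure (interior {y | g y = gs i y})}) :
    ∃ (α : ℝ) (β : Fin l → ℝ), 0 ≤ α ∧ (∀ j, 0 ≤ β j) ∧ α + ∑ j, β j = 1 ∧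
      α • gradient f x0 + ∑ j, β j • gradient (gs (idx j)) x0 = 0 ∧
      ∃ j, β j = 0 := by
  classical
  set C : Fin k → Set (EuclideanSpace ℝ (Fin n)) :=
    fun i => closure (interior {y | g y = gs i y}) with hCdef
  set Ie : EuclideanSpace ℝ (Fin n) → Set (Fin k) := fun x => {i | x ∈ C i} with hIedef
  -- gradients are continuous
  have hgradf : Continuous (fun x => gradient f x) :=
    (InnerProductSpace.toDual ℝ _).symm.continuous.comp (hf.continuous_fderiv one_ne_zero)
  have hgradg : ∀ i, Continuous (fun x => gradient (gs i) x) := fun i =>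
    (InnerProductSpace.toDual ℝ _).symm.continuous.comp ((hgs i).continuous_fderiv one_ne_zero)
  -- the neighborhood U₀ where the essentially active set is ⊆ range idx
  set U0 : Set (EuclideanSpace ℝ (Fin n)) :=
    ⋂ i : Fin k, if i ∈ Set.range idx then Set.univ else (C i)ᶜ with hU0def
  have hU0open : IsOpen U0 := by
    apply isOpen_iInter_of_finite
    intro i
    by_cases h : i ∈ Set.range idx
    · simp [h]
    · simp only [h, if_false]
      exact isClosed_closure.isOpen_compl
  have hx0U0 : x0 ∈ U0 := by
    apply Set.mem_iInter.2
    intro i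
    by_cases h : i ∈ Set.range idx
    · simp [h]
    · simp only [h, if_false, Set.mem_compl_iff]
      intro hxi
      exact h (hIe ▸ hxi)
  have hU0sub : ∀ x ∈ U0, Ie x ⊆ Set.range idx := by
    intro x hx i hi
    by_contra hir
    have := Set.mem_iInter.1 hx i
    simp only [hir, if_false, Set.mem_compl_iff] at this
    exact this hi
  -- the sets S j of Pareto critical points near x0 missing idx j
  set S : Fin l → Set (EuclideanSpace ℝ (Fin n)) :=
    fun j => {x | x ∈ Pc ∧ x ∈ U0 ∧ x ∉ C (idx j)} with hSdef
  have hclos : ∃ j₀, x0 ∈ closure (S j₀) := by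
    by_contra h
    push_neg at h
    set V : Set (EuclideanSpace ℝ (Fin n)) := U0 ∩ ⋂ j : Fin l, (closure (S j))ᶜ with hVdef
    have hVopen : IsOpen V :=
      hU0open.inter (isOpen_iInter_of_finite fun j => isClosed_closure.isOpen_compl)
    have hx0V : x0 ∈ V := ⟨hx0U0, Set.mem_iInter.2 fun j => h j⟩
    obtain ⟨x, ⟨hxPc, hxV⟩, hne⟩ := hacc V hVopen hx0V
    have hxU0 : x ∈ U0 := hxV.1
    have hsub : Ie x ⊆ Set.range idx := hU0sub x hxU0
    have hne' : Ie x ≠ Set.range idx := by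
      intro heq; exact hne (heq.trans hIe.symm)
    obtain ⟨i, hir, hin⟩ : ∃ i ∈ Set.range idx, i ∉ Ie x := by
      by_contra hc
      push_neg at hc
      exact hne' (Set.Subset.antisymm hsub hc)
    obtain ⟨j, rfl⟩ := hir
    have hxS : x ∈ S j := ⟨hxPc, hxU0, hin⟩
    exact (Set.mem_iInter.1 hxV.2 j) (subset_closure hxS)
  obtain ⟨j₀, hclos⟩ := hclos
  -- a sequence in S j₀ converging to x0
  obtain ⟨u, huS, hu⟩ := mem_closure_iff_seq_limit.1 hclos
  -- weights for each point of the sequence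
  have hw : ∀ m : ℕ, ∃ w : Option (Fin l) → ℝ, (∀ c, 0 ≤ w c) ∧ ∑ c, w c = 1 ∧
      w (some j₀) = 0 ∧
      w none • gradient f (u m) + ∑ j, w (some j) • gradient (gs (idx j)) (u m) = 0 := by
    intro m
    obtain ⟨hPcm, hU0m, hmiss⟩ := huS m
    have hmem : (0 : EuclideanSpace ℝ (Fin n)) ∈ convexHull ℝ
        (insert (gradient f (u m)) ((fun i => gradient (gs i) (u m)) '' Ie (u m))) := by
      rw [hPc] at hPcm; exact hPcm
    have himg : (fun i => gradient (gs i) (u m)) '' Ie (u m)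
        = (fun j => gradient (gs (idx j)) (u m)) '' (idx ⁻¹' Ie (u m)) := by
      rw [show (fun j : Fin l => gradient (gs (idx j)) (u m))
          = (fun i => gradient (gs i) (u m)) ∘ idx from rfl, Set.image_comp,
        Set.image_preimage_eq_inter_range,
        Set.inter_eq_left.2 (hU0sub _ hU0m)]
    rw [himg] at hmem
    obtain ⟨w, hw0, hw1, hw2, hw3⟩ := aux_weights (idx ⁻¹' Ie (u m))
      (fun j => gradient (gs (idx j)) (u m)) (gradient f (u m)) hmem
    exact ⟨w, hw0, hw1, hw2 j₀ (by exact hmiss), hw3⟩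
  choose w hw0 hw1 hw2 hw3 using hw
  -- compactness of the restricted simplex
  set K : Set (Option (Fin l) → ℝ) :=
    stdSimplex ℝ (Option (Fin l)) ∩ {w | w (some j₀) = 0} with hKdef
  have hKcomp : IsCompact K :=
    (isCompact_stdSimplex ℝ _).inter_right (isClosed_eq (continuous_apply _) continuous_const)
  have hwK : ∀ m, w m ∈ K := fun m => ⟨⟨hw0 m, hw1 m⟩, hw2 m⟩
  obtain ⟨wl, hwlK, φ, hφ, hwlim⟩ := hKcomp.tendsto_subseq hwK
  -- pass to the limit
  have huφ : Tendsto (fun m => u (φ m)) atTop (𝓝 x0) := hu.comp hφ.tendsto_atTop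
  have hcoord : ∀ c, Tendsto (fun m => w (φ m) c) atTop (𝓝 (wl c)) := by
    intro c
    exact ((continuous_apply c).tendsto _).comp hwlim
  have hlim : Tendsto (fun m => w (φ m) none • gradient f (u (φ m)) +
      ∑ j, w (φ m) (some j) • gradient (gs (idx j)) (u (φ m))) atTop
      (𝓝 (wl none • gradient f x0 + ∑ j, wl (some j) • gradient (gs (idx j)) x0)) := by
    apply Tendsto.add
    · exact (hcoord none).smul ((hgradf.tendsto x0).comp huφ)
    · exact tendsto_finset_sum _ fun j _ =>
        (hcoord (some j)).smul (((hgradg (idx j)).tendsto x0).comp huφ)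
  have hzero : wl none • gradient f x0 + ∑ j, wl (some j) • gradient (gs (idx j)) x0 = 0 := by
    have : Tendsto (fun _ : ℕ => (0 : EuclideanSpace ℝ (Fin n))) atTop
        (𝓝 (wl none • gradient f x0 + ∑ j, wl (some j) • gradient (gs (idx j)) x0)) := by
      convert hlim using 1
      funext m
      exact (hw3 (φ m)).symm
    exact tendsto_nhds_unique this tendsto_const_nhds
  refine ⟨wl none, fun j => wl (some j), hwlK.1.1 none, fun j => hwlK.1.1 (some j), ?_,
    hzero, ⟨j₀, hwlK.2⟩⟩
  have := hwlK.1.2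
  rwa [Fintype.sum_option] at this
end

section
/- Let A ∈ ℝ^{n×n} be symmetric, b ∈ ℝⁿ, and let d₁, …, d_r ∈ ℝⁿ, e ∈ ℝ^r. Define h : ℝⁿ × ℝ × ℝ^r → ℝⁿ × ℝ × ℝ^{r−1} by h(x, α, β) = (α(Ax + b) + Σ_{j=1}^r β_j d_j, α + Σ_{j=1}^r β_j − 1, ((d_j − d₁)ᵀx + e_j − e₁)_{j=2,…,r}). Let (x⁰, α⁰, β⁰) satisfy α⁰ > 0, β⁰_j > 0 for all j, and h(x⁰, α⁰, β⁰) = 0. Let K := ker(Dh(x⁰, α⁰, β⁰)), the kernel of the (Fréchet) derivative of h at (x⁰, α⁰, β⁰), and let pr_x : ℝⁿ × ℝ × ℝ^r → ℝⁿ denote projection onto the first n coordinates. Then there exists an open neighborhood U' of x⁰ in ℝⁿ such that {x ∈ U' : ∃ α > 0 and β ∈ ℝ^r with β_j > 0 for all j and h(x, α, β) = 0} = (x⁰ + pr_x(K)) ∩ U'. -/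
open scoped BigOperators

noncomputable def sumVecCLM {n r : ℕ} (d : Fin r → Fin n → ℝ) :
    (Fin r → ℝ) →L[ℝ] (Fin n → ℝ) :=
  LinearMap.toContinuousLinearMap
  { toFun := fun t => ∑ j, t j • d j
    map_add' := fun s t => by simp [add_smul, Finset.sum_add_distrib]
    map_smul' := fun c t => by simp [Finset.smul_sum, smul_smul] }

@[simp] lemma sumVecCLM_apply {n r : ℕ} (d : Fin r → Fin n → ℝ) (t : Fin r → ℝ) :
    sumVecCLM d t = ∑ j, t j • d j := rfl

noncomputable def sumCLM (r : ℕ) : (Fin r → ℝ) →L[ℝ] ℝ :=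
  LinearMap.toContinuousLinearMap
  { toFun := fun t => ∑ j, t j
    map_add' := fun s t => by simp [Finset.sum_add_distrib]
    map_smul' := fun c t => by simp [Finset.mul_sum] }

@[simp] lemma sumCLM_apply {r : ℕ} (t : Fin r → ℝ) : sumCLM r t = ∑ j, t j := rfl

noncomputable def rowsCLM {n : ℕ} {κ : Type*} (c : κ → Fin n → ℝ) :
    (Fin n → ℝ) →L[ℝ] (κ → ℝ) :=
  LinearMap.toContinuousLinearMap
  { toFun := fun u jj => ∑ i, c jj i * u i
    map_add' := fun s t => by
      funext jj; simp [mul_add, Finset.sum_add_distrib]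
    map_smul' := fun a t => by
      funext jj
      simp only [RingHom.id_apply, Pi.smul_apply, smul_eq_mul, Finset.mul_sum]
      exact Finset.sum_congr rfl fun i _ => by ring }

@[simp] lemma rowsCLM_apply {n : ℕ} {κ : Type*} (c : κ → Fin n → ℝ) (u : Fin n → ℝ) (jj : κ) :
    rowsCLM c u jj = ∑ i, c jj i * u i := rfl

noncomputable def matCLM {n : ℕ} (A : Matrix (Fin n) (Fin n) ℝ) :
    (Fin n → ℝ) →L[ℝ] (Fin n → ℝ) :=
  LinearMap.toContinuousLinearMap A.mulVecLin

@[simp] lemma matCLM_apply {n : ℕ} (A : Matrix (Fin n) (Fin n) ℝ) (u : Fin n → ℝ) :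
    matCLM A u = A.mulVec u := rfl

section
variable {n r : ℕ}

-- projections
noncomputable def pix (n r : ℕ) : ((Fin n → ℝ) × ℝ × (Fin r → ℝ)) →L[ℝ] (Fin n → ℝ) :=
  ContinuousLinearMap.fst ℝ _ _
noncomputable def pia (n r : ℕ) : ((Fin n → ℝ) × ℝ × (Fin r → ℝ)) →L[ℝ] ℝ :=
  (ContinuousLinearMap.fst ℝ ℝ (Fin r → ℝ)).comp (ContinuousLinearMap.snd ℝ _ _)
noncomputable def pib (n r : ℕ) : ((Fin n → ℝ) × ℝ × (Fin r → ℝ)) →L[ℝ] (Fin r → ℝ) :=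
  (ContinuousLinearMap.snd ℝ ℝ (Fin r → ℝ)).comp (ContinuousLinearMap.snd ℝ _ _)

@[simp] lemma pix_apply (p : (Fin n → ℝ) × ℝ × (Fin r → ℝ)) : pix n r p = p.1 := rfl
@[simp] lemma pia_apply (p : (Fin n → ℝ) × ℝ × (Fin r → ℝ)) : pia n r p = p.2.1 := rfl
@[simp] lemma pib_apply (p : (Fin n → ℝ) × ℝ × (Fin r → ℝ)) : pib n r p = p.2.2 := rfl

noncomputable def Dmap (hr : 0 < r) (A : Matrix (Fin n) (Fin n) ℝ) (b : Fin n → ℝ)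
    (d : Fin r → Fin n → ℝ) (x0 : Fin n → ℝ) (α0 : ℝ) :
    ((Fin n → ℝ) × ℝ × (Fin r → ℝ)) →L[ℝ] ((Fin n → ℝ) × ℝ × (Fin (r-1) → ℝ)) :=
  ((α0 • ((matCLM A).comp (pix n r)) + (pia n r).smulRight (A.mulVec x0 + b))
      + (sumVecCLM d).comp (pib n r)).prod
    (((pia n r) + (sumCLM r).comp (pib n r)).prod
      ((rowsCLM (fun jj : Fin (r-1) => fun i =>
          d ⟨jj.1 + 1, Nat.add_lt_of_lt_sub jj.isLt⟩ i - d ⟨0, hr⟩ i)).comp (pix n r)))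

lemma Dmap_apply (hr : 0 < r) (A : Matrix (Fin n) (Fin n) ℝ) (b : Fin n → ℝ)
    (d : Fin r → Fin n → ℝ) (x0 : Fin n → ℝ) (α0 : ℝ)
    (v : (Fin n → ℝ) × ℝ × (Fin r → ℝ)) :
    Dmap hr A b d x0 α0 v =
      (α0 • A.mulVec v.1 + v.2.1 • (A.mulVec x0 + b) + ∑ j, v.2.2 j • d j,
       v.2.1 + ∑ j, v.2.2 j,
       fun jj : Fin (r-1) =>
         ∑ i, (d ⟨jj.1 + 1, Nat.add_lt_of_lt_sub jj.isLt⟩ i - d ⟨0, hr⟩ i) * v.1 i) := by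
  refine Prod.ext ?_ (Prod.ext ?_ ?_)
  · simp [Dmap, add_assoc]
  · simp [Dmap]
  · funext jj; simp [Dmap]

lemma hasD (hr : 0 < r) (A : Matrix (Fin n) (Fin n) ℝ) (b : Fin n → ℝ)
    (d : Fin r → Fin n → ℝ) (e : Fin r → ℝ)
    (h : (Fin n → ℝ) × ℝ × (Fin r → ℝ) → (Fin n → ℝ) × ℝ × (Fin (r - 1) → ℝ))
    (hh : h = fun p =>
      (p.2.1 • (A.mulVec p.1 + b) + ∑ j, p.2.2 j • d j,
       p.2.1 + ∑ j, p.2.2 j - 1,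
       fun j : Fin (r - 1) =>
         (∑ i, (d ⟨j.1 + 1, Nat.add_lt_of_lt_sub j.isLt⟩ i - d ⟨0, hr⟩ i) * p.1 i)
           + e ⟨j.1 + 1, Nat.add_lt_of_lt_sub j.isLt⟩ - e ⟨0, hr⟩))
    (x0 : Fin n → ℝ) (α0 : ℝ) (β0 : Fin r → ℝ) :
    HasFDerivAt h (Dmap hr A b d x0 α0) (x0, α0, β0) := by
  have hfun : h = fun p : (Fin n → ℝ) × ℝ × (Fin r → ℝ) =>
      (pia n r p • ((matCLM A).comp (pix n r) p + b) + (sumVecCLM d).comp (pib n r) p,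
       ((pia n r p + (sumCLM r).comp (pib n r) p) - 1,
       (rowsCLM (fun jj : Fin (r-1) => fun i =>
          d ⟨jj.1 + 1, Nat.add_lt_of_lt_sub jj.isLt⟩ i - d ⟨0, hr⟩ i)).comp (pix n r) p
        + fun jj : Fin (r-1) => e ⟨jj.1 + 1, Nat.add_lt_of_lt_sub jj.isLt⟩ - e ⟨0, hr⟩)) := by
    rw [hh]; funext p
    refine Prod.ext ?_ (Prod.ext ?_ ?_)
    · simp
    · simp
    · funext jj; simp; ring
  rw [hfun]
  have h1 : HasFDerivAt
      (fun p : (Fin n → ℝ) × ℝ × (Fin r → ℝ) => pia n r p • ((matCLM A).comp (pix n r) p + b))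
      (α0 • ((matCLM A).comp (pix n r)) + (pia n r).smulRight (A.mulVec x0 + b)) (x0, α0, β0) := by
    have := ((pia n r).hasFDerivAt (x := (x0, α0, β0))).smul
      ((((matCLM A).comp (pix n r)).hasFDerivAt (x := (x0, α0, β0))).add_const b)
    exact this
  exact (HasFDerivAt.prodMk (h1.add ((sumVecCLM d).comp (pib n r)).hasFDerivAt)
    (HasFDerivAt.prodMk (((pia n r).hasFDerivAt.add ((sumCLM r).comp (pib n r)).hasFDerivAt).sub_const 1)
      ((((rowsCLM (fun jj : Fin (r-1) => fun i =>
          d ⟨jj.1 + 1, Nat.add_lt_of_lt_sub jj.isLt⟩ i - d ⟨0, hr⟩ i)).comp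
            (pix n r)).hasFDerivAt (x := (x0, α0, β0))).add_const _)))

end


/-- Remark SM3 of the paper. For a quadratic objective (gradient `Ax + b`
with `A` symmetric) and affinely linear selection functions `g_j(x) = d_jᵀx + e_j`, near a
zero `(x⁰,α⁰,β⁰)` of `h` with positive multipliers, the set
`{x : ∃ α > 0, β > 0, h(x,α,β) = 0}` agrees locally with the translate
`x⁰ + pr_x(ker Dh(x⁰,α⁰,β⁰))`. -/
theorem stmt11 {n r : ℕ} (hr : 0 < r)
    (A : Matrix (Fin n) (Fin n) ℝ) (hA : A.IsSymm)
    (b : Fin n → ℝ) (d : Fin r → Fin n → ℝ) (e : Fin r → ℝ)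
    (h : (Fin n → ℝ) × ℝ × (Fin r → ℝ) → (Fin n → ℝ) × ℝ × (Fin (r - 1) → ℝ))
    (hh : h = fun p =>
      (p.2.1 • (A.mulVec p.1 + b) + ∑ j, p.2.2 j • d j,
       p.2.1 + ∑ j, p.2.2 j - 1,
       fun j : Fin (r - 1) =>
         (∑ i, (d ⟨j.1 + 1, by have := j.isLt; omega⟩ i - d ⟨0, hr⟩ i) * p.1 i)
           + e ⟨j.1 + 1, by have := j.isLt; omega⟩ - e ⟨0, hr⟩))
    (x0 : Fin n → ℝ) (α0 : ℝ) (β0 : Fin r → ℝ)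
    (hα0 : 0 < α0) (hβ0 : ∀ j, 0 < β0 j)
    (hzero : h (x0, α0, β0) = 0) :
    ∃ U' : Set (Fin n → ℝ), IsOpen U' ∧ x0 ∈ U' ∧
      {x ∈ U' | ∃ α : ℝ, 0 < α ∧ ∃ β : Fin r → ℝ, (∀ j, 0 < β j) ∧ h (x, α, β) = 0}
        = ((fun y => x0 + y) ''
            (Prod.fst '' (LinearMap.ker (fderiv ℝ h (x0, α0, β0) :
                (Fin n → ℝ) × ℝ × (Fin r → ℝ) →ₗ[ℝ] (Fin n → ℝ) × ℝ × (Fin (r - 1) → ℝ)) :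
              Set ((Fin n → ℝ) × ℝ × (Fin r → ℝ))))) ∩ U' := by
  classical
  have hα0ne : α0 ≠ 0 := ne_of_gt hα0
  have hfd : fderiv ℝ h (x0, α0, β0) = Dmap hr A b d x0 α0 :=
    (hasD hr A b d e h hh x0 α0 β0).fderiv
  -- zero set characterization
  have hzs : ∀ (x : Fin n → ℝ) (α : ℝ) (β : Fin r → ℝ), h (x, α, β) = 0 ↔
      ((∀ i, α * (A.mulVec x i + b i) + ∑ j, β j * d j i = 0) ∧
       (α + ∑ j, β j = 1) ∧
       (∀ jj : Fin (r-1), (∑ i, (d ⟨jj.1 + 1, by have := jj.isLt; omega⟩ i - d ⟨0, hr⟩ i) * x i)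
           + e ⟨jj.1 + 1, by have := jj.isLt; omega⟩ - e ⟨0, hr⟩ = 0)) := by
    intro x α β
    rw [hh, Prod.ext_iff, Prod.ext_iff]
    simp only [Prod.fst_zero, Prod.snd_zero, funext_iff, Pi.zero_apply, Pi.add_apply,
      Pi.smul_apply, smul_eq_mul, Finset.sum_apply, sub_eq_zero]
  -- kernel characterization
  have hker : ∀ v : (Fin n → ℝ) × ℝ × (Fin r → ℝ),
      v ∈ LinearMap.ker (fderiv ℝ h (x0, α0, β0) :
                (Fin n → ℝ) × ℝ × (Fin r → ℝ) →ₗ[ℝ] (Fin n → ℝ) × ℝ × (Fin (r - 1) → ℝ)) ↔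
      ((∀ i, α0 * A.mulVec v.1 i + v.2.1 * (A.mulVec x0 i + b i) + ∑ j, v.2.2 j * d j i = 0) ∧
       (v.2.1 + ∑ j, v.2.2 j = 0) ∧
       (∀ jj : Fin (r-1),
          ∑ i, (d ⟨jj.1 + 1, by have := jj.isLt; omega⟩ i - d ⟨0, hr⟩ i) * v.1 i = 0)) := by
    intro v
    rw [LinearMap.mem_ker, hfd, ContinuousLinearMap.coe_coe, Dmap_apply, Prod.ext_iff, Prod.ext_iff]
    simp only [Prod.fst_zero, Prod.snd_zero, funext_iff, Pi.zero_apply, Pi.add_apply,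
      Pi.smul_apply, smul_eq_mul, Finset.sum_apply]
  obtain ⟨Z1, Z2, Z3⟩ := (hzs x0 α0 β0).mp hzero
  -- the section of the projection of the kernel
  set K : Submodule ℝ ((Fin n → ℝ) × ℝ × (Fin r → ℝ)) :=
    LinearMap.ker (fderiv ℝ h (x0, α0, β0) :
                (Fin n → ℝ) × ℝ × (Fin r → ℝ) →ₗ[ℝ] (Fin n → ℝ) × ℝ × (Fin (r - 1) → ℝ)) with hK
  set pk : K →ₗ[ℝ] (Fin n → ℝ) :=
    (LinearMap.fst ℝ (Fin n → ℝ) (ℝ × (Fin r → ℝ))).comp K.subtype with hpk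
  set V : Submodule ℝ (Fin n → ℝ) := LinearMap.range pk with hV
  obtain ⟨g, hg⟩ := pk.rangeRestrict.exists_rightInverse_of_surjective
    (LinearMap.range_rangeRestrict pk)
  obtain ⟨V', hVc⟩ := V.exists_isCompl
  set π : (Fin n → ℝ) →ₗ[ℝ] V := V.linearProjOfIsCompl V' hVc with hπ
  set Φ : (Fin n → ℝ) → ℝ × (Fin r → ℝ) :=
    fun y => ((g (π (y - x0)) : (Fin n → ℝ) × ℝ × (Fin r → ℝ))).2 with hΦ
  have hΦcont : Continuous Φ := by
    have hc1 : Continuous fun y : Fin n → ℝ => π (y - x0) :=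
      π.continuous_of_finiteDimensional.comp (continuous_id.sub continuous_const)
    have hc2 : Continuous fun y : Fin n → ℝ => g (π (y - x0)) :=
      g.continuous_of_finiteDimensional.comp hc1
    exact hc2.subtype_val.snd
  set O : Set (ℝ × (Fin r → ℝ)) :=
    (Metric.ball (0:ℝ) (α0/2)) ×ˢ (Set.univ.pi fun j => Metric.ball (0:ℝ) (β0 j / 2)) with hO
  have hOopen : IsOpen O := Metric.isOpen_ball.prod
    (isOpen_set_pi Set.finite_univ (fun j _ => Metric.isOpen_ball))
  refine ⟨Φ ⁻¹' O, hOopen.preimage hΦcont, ?_, ?_⟩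
  · show Φ x0 ∈ O
    have h0 : Φ x0 = 0 := by simp [hΦ]
    rw [h0]
    constructor
    · simpa [Metric.mem_ball] using half_pos hα0
    · intro j _; simpa [Metric.mem_ball] using half_pos (hβ0 j)
  · ext x
    simp only [Set.mem_setOf_eq, Set.mem_inter_iff, Set.mem_image, SetLike.mem_coe]
    constructor
    · rintro ⟨hxU, α, hαpos, β, hβpos, hxe⟩
      have hαne : α ≠ 0 := ne_of_gt hαpos
      obtain ⟨W1, W2, W3⟩ := (hzs x α β).mp hxe
      refine ⟨⟨x - x0, ⟨(x - x0, (α0/α) * (α - α0), (α0/α) • (β - β0)), ?_, rfl⟩,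
        by rw [add_sub_cancel]⟩, hxU⟩
      refine (hker _).mpr ⟨?_, ?_, ?_⟩
      · intro i
        have hmv : A.mulVec (x - x0) i = A.mulVec x i - A.mulVec x0 i := by
          rw [Matrix.mulVec_sub]; rfl
        have hs0 : ∑ j, (((α0/α) • (β - β0)) j) * d j i
            = (α0/α) * ((∑ j, β j * d j i) - ∑ j, β0 j * d j i) := by
          rw [← Finset.sum_sub_distrib, Finset.mul_sum]
          exact Finset.sum_congr rfl fun j _ => by simp [Pi.smul_apply, Pi.sub_apply]; ring
        have hαc : α0 / α * α = α0 := div_mul_cancel₀ α0 hαne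
        simp only []
        rw [hmv, hs0]
        linear_combination (α0/α) * (W1 i) - (α0/α) * (Z1 i) +
          (A.mulVec x0 i - A.mulVec x i) * hαc
      · have hs0 : ∑ j, ((α0/α) • (β - β0)) j = (α0/α) * ((∑ j, β j) - ∑ j, β0 j) := by
          rw [← Finset.sum_sub_distrib, Finset.mul_sum]
          exact Finset.sum_congr rfl fun j _ => by simp [Pi.smul_apply, Pi.sub_apply]
        simp only []
        rw [hs0]
        linear_combination (α0/α) * W2 - (α0/α) * Z2
      · intro jj
        have hs0 : ∑ i, (d ⟨jj.1 + 1, by have := jj.isLt; omega⟩ i - d ⟨0, hr⟩ i) * (x - x0) i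
            = (∑ i, (d ⟨jj.1 + 1, by have := jj.isLt; omega⟩ i - d ⟨0, hr⟩ i) * x i)
              - ∑ i, (d ⟨jj.1 + 1, by have := jj.isLt; omega⟩ i - d ⟨0, hr⟩ i) * x0 i := by
          rw [← Finset.sum_sub_distrib]
          exact Finset.sum_congr rfl fun i _ => by simp [Pi.sub_apply]; ring
        simp only []
        rw [hs0]
        linear_combination W3 jj - Z3 jj
    · rintro ⟨⟨u, ⟨v, hvK, hv1⟩, hxeq⟩, hxU⟩
      refine ⟨hxU, ?_⟩
      have huV : u ∈ V := ⟨⟨v, hvK⟩, hv1⟩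
      set w : V := ⟨u, huV⟩ with hw
      set z := g w with hz
      have hz1 : ((z : (Fin n → ℝ) × ℝ × (Fin r → ℝ))).1 = u := by
        have := congrArg (fun f => (f w : Fin n → ℝ)) hg
        exact this
      obtain ⟨K1, K2, K3⟩ := (hker (z : (Fin n → ℝ) × ℝ × (Fin r → ℝ))).mp z.2
      rw [hz1] at K1 K3
      set s := ((z : (Fin n → ℝ) × ℝ × (Fin r → ℝ))).2.1 with hs
      set t := ((z : (Fin n → ℝ) × ℝ × (Fin r → ℝ))).2.2 with ht
      have hΦx : Φ x = (s, t) := by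
        have hxu : x - x0 = u := by rw [← hxeq]; rw [add_sub_cancel_left]
        have hπu : π u = w := by
          have := Submodule.linearProjOfIsCompl_apply_left hVc w
          exact this
        show ((g (π (x - x0)) : (Fin n → ℝ) × ℝ × (Fin r → ℝ))).2 = (s, t)
        rw [hxu, hπu, ← hz]
      have hxO := hxU
      rw [Set.mem_preimage, hΦx] at hxO
      obtain ⟨hsO, htO⟩ := hxO
      rw [Metric.mem_ball, dist_zero_right, Real.norm_eq_abs] at hsO
      have htO' : ∀ j, |t j| < β0 j / 2 := by
        intro j
        have := htO j (Set.mem_univ j)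
        rwa [Metric.mem_ball, dist_zero_right, Real.norm_eq_abs] at this
      have hslt : s < α0 / 2 := lt_of_le_of_lt (le_abs_self s) hsO
      have hden : 0 < α0 - s := by linarith
      set lam := α0 / (α0 - s) with hlam
      have hlam_pos : 0 < lam := div_pos hα0 hden
      have hlam_lt2 : lam < 2 := by
        rw [hlam, div_lt_iff₀ hden]; linarith
      have hlamkey : lam * (α0 - s) = α0 := div_mul_cancel₀ α0 (ne_of_gt hden)
      refine ⟨α0 + lam * s, ?_, fun j => β0 j + lam * t j, ?_, ?_⟩
      · have h2 : lam * α0 - lam * s = α0 := by linear_combination hlamkey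
        have h3 := mul_pos hlam_pos hα0
        linarith
      · intro j
        show 0 < β0 j + lam * t j
        have hb := hβ0 j
        have h1 : |lam * t j| < β0 j := by
          rw [abs_mul, abs_of_pos hlam_pos]
          calc lam * |t j| < 2 * (β0 j / 2) :=
                mul_lt_mul'' hlam_lt2 (htO' j) (le_of_lt hlam_pos) (abs_nonneg _)
            _ = β0 j := by ring
        have := neg_abs_le (lam * t j)
        linarith
      · rw [show x = x0 + u from hxeq.symm]
        refine (hzs _ _ _).mpr ⟨?_, ?_, ?_⟩
        · intro i
          have hmv : A.mulVec (x0 + u) i = A.mulVec x0 i + A.mulVec u i := by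
            rw [Matrix.mulVec_add]; rfl
          have hsum : ∑ j, (β0 j + lam * t j) * d j i
              = (∑ j, β0 j * d j i) + lam * ∑ j, t j * d j i := by
            rw [Finset.mul_sum, ← Finset.sum_add_distrib]
            exact Finset.sum_congr rfl fun j _ => by ring
          rw [hmv, hsum]
          linear_combination Z1 i + lam * K1 i - (A.mulVec u i) * hlamkey
        · have hsum : ∑ j, (β0 j + lam * t j) = (∑ j, β0 j) + lam * ∑ j, t j := by
            rw [Finset.mul_sum, ← Finset.sum_add_distrib]
          rw [hsum]
          linear_combination Z2 + lam * K2
        · intro jj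
          have hsum : ∑ i, (d ⟨jj.1 + 1, by have := jj.isLt; omega⟩ i - d ⟨0, hr⟩ i) * (x0 + u) i
              = (∑ i, (d ⟨jj.1 + 1, by have := jj.isLt; omega⟩ i - d ⟨0, hr⟩ i) * x0 i)
                + ∑ i, (d ⟨jj.1 + 1, by have := jj.isLt; omega⟩ i - d ⟨0, hr⟩ i) * u i := by
            rw [← Finset.sum_add_distrib]
            exact Finset.sum_congr rfl fun i _ => by simp [Pi.add_apply]; ring
          rw [hsum]
          linear_combination Z3 jj + K3 jj
end

section
/- Let g : ℝⁿ → ℝ be convex and let A : ℝⁿ → ℝ be an affine map. Let V := interior({x ∈ ℝⁿ : g(x) = A(x)}), let y ∈ V and let z ∈ ℝⁿ with g(z) = A(z). Then g((1−λ)·y + λ·z) = A((1−λ)·y + λ·z) for every λ ∈ [0,1]. -/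
/-- Key step of Remark SM5 (SVM). For a convex `g` and an affine map `A`
agreeing with `g` on an open set containing `y`, and `z` with `g z = A z`, the functions
`g` and `A` agree along the whole segment from `y` to `z`. -/
theorem stmt12 {n : ℕ} (g : EuclideanSpace ℝ (Fin n) → ℝ)
    (hg : ConvexOn ℝ Set.univ g)
    (A : EuclideanSpace ℝ (Fin n) →ᵃ[ℝ] ℝ)
    (y : EuclideanSpace ℝ (Fin n)) (hy : y ∈ interior {x | g x = A x})
    (z : EuclideanSpace ℝ (Fin n)) (hz : g z = A z)
    (lam : ℝ) (hlam : lam ∈ Set.Icc (0 : ℝ) 1) :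
    g ((1 - lam) • y + lam • z) = A ((1 - lam) • y + lam • z) := by
  obtain ⟨hl0, hl1⟩ := hlam
  have hgy : g y = A y := (interior_subset hy : y ∈ {x | g x = A x})
  set w : EuclideanSpace ℝ (Fin n) := (1 - lam) • y + lam • z with hw
  -- upper bound
  have hAw : A w = (1 - lam) * A y + lam * A z := by
    have := Convex.combo_affine_apply (f := A) (x := y) (y := z)
      (a := 1 - lam) (b := lam) (by ring)
    simpa [smul_eq_mul] using this
  have hle : g w ≤ A w := by
    have := hg.2 (Set.mem_univ y) (Set.mem_univ z)
      (show (0:ℝ) ≤ 1 - lam by linarith) (show (0:ℝ) ≤ lam from hl0) (by ring)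
    rw [hAw, ← hgy, ← hz]
    simpa [smul_eq_mul] using this
  -- lower bound via interior
  rcases Metric.mem_nhds_iff.1 (mem_interior_iff_mem_nhds.1 hy) with ⟨ε, hε, hball⟩
  by_contra hne
  have hlt : g w < A w := lt_of_le_of_ne hle hne
  have hwy : w ≠ y := by
    intro h; rw [h] at hlt; exact absurd hgy (ne_of_lt hlt)
  have hd : 0 < ‖y - w‖ := norm_pos_iff.2 (sub_ne_zero_of_ne hwy.symm)
  set s : ℝ := ε / (2 * ‖y - w‖) with hs
  have hs0 : 0 < s := div_pos hε (by positivity)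
  have h1s : (0:ℝ) < 1 + s := by linarith
  set p : EuclideanSpace ℝ (Fin n) := y + s • (y - w) with hpdef
  have hp : p ∈ Metric.ball y ε := by
    rw [Metric.mem_ball, dist_eq_norm, hpdef]
    have h2 : ‖y + s • (y - w) - y‖ = s * ‖y - w‖ := by
      rw [add_sub_cancel_left, norm_smul, Real.norm_eq_abs, abs_of_pos hs0]
    have h3 : s * ‖y - w‖ = ε / 2 := by
      rw [hs]; field_simp
    rw [h2, h3]; linarith
  have hgp : g p = A p := hball hp
  have hab : 1 / (1 + s) + s / (1 + s) = 1 := by field_simp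
  have hcombo : (1 / (1 + s)) • p + (s / (1 + s)) • w = y := by
    rw [hpdef]
    match_scalars <;> (first | (field_simp; done) | (field_simp; ring))
  have hAy : A y = 1 / (1 + s) * A p + s / (1 + s) * A w := by
    have := Convex.combo_affine_apply (f := A) (x := p) (y := w)
      (a := 1 / (1 + s)) (b := s / (1 + s)) hab
    rw [hcombo] at this
    simpa [smul_eq_mul] using this
  have hconv : g y ≤ 1 / (1 + s) * g p + s / (1 + s) * g w := by
    have := hg.2 (Set.mem_univ p) (Set.mem_univ w)
      (show (0:ℝ) ≤ 1 / (1 + s) by positivity) (show (0:ℝ) ≤ s / (1 + s) by positivity) hab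
    rw [hcombo] at this
    simpa [smul_eq_mul] using this
  rw [hgy, hAy, hgp] at hconv
  have : (s / (1 + s)) * g w < (s / (1 + s)) * A w :=
    mul_lt_mul_of_pos_left hlt (by positivity)
  linarith
end

section
/- Let g : ℝⁿ → ℝ be convex and let A : ℝⁿ → ℝ be an affine map. Assume interior({x ∈ ℝⁿ : g(x) = A(x)}) is nonempty, and let z ∈ ℝⁿ with g(z) = A(z). Then z ∈ closure(interior({x ∈ ℝⁿ : g(x) = A(x)})). -/
/-- Main conclusion of Remark SM5 (SVM). For a convex `g` and an affine map
`A` with nonempty `interior {x | g x = A x}`, every point `z` with `g z = A z` lies in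
`closure (interior {x | g x = A x})`. -/
theorem stmt13 {n : ℕ} (g : EuclideanSpace ℝ (Fin n) → ℝ)
    (hg : ConvexOn ℝ Set.univ g)
    (A : EuclideanSpace ℝ (Fin n) →ᵃ[ℝ] ℝ)
    (hne : (interior {x | g x = A x}).Nonempty)
    (z : EuclideanSpace ℝ (Fin n)) (hz : g z = A z) :
    z ∈ closure (interior {x | g x = A x}) := by
  obtain ⟨x₀, hx₀⟩ := hne
  set S : Set (EuclideanSpace ℝ (Fin n)) := {x | g x = A x} with hS
  -- a ball around x₀ inside S
  obtain ⟨r, hr, hball⟩ := Metric.isOpen_iff.1 isOpen_interior x₀ hx₀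
  have hx₀S : g x₀ = A x₀ := (interior_subset hx₀ : x₀ ∈ S)
  -- Step 1: A ≤ g everywhere
  have hnonneg : ∀ p, A p ≤ g p := by
    intro p
    by_contra hlt
    push_neg at hlt
    set ε : ℝ := r / (2 * (‖x₀ - p‖ + 1)) with hε
    have hεpos : 0 < ε := by
      apply div_pos hr
      positivity
    set q := x₀ + ε • (x₀ - p) with hq
    have hqball : q ∈ Metric.ball x₀ r := by
      rw [Metric.mem_ball, dist_eq_norm]
      have : q - x₀ = ε • (x₀ - p) := by rw [hq]; abel
      rw [this, norm_smul, Real.norm_eq_abs, abs_of_pos hεpos, hε]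
      have h1 : ‖x₀ - p‖ < ‖x₀ - p‖ + 1 := by linarith
      have h2 : 0 < ‖x₀ - p‖ + 1 := by positivity
      calc r / (2 * (‖x₀ - p‖ + 1)) * ‖x₀ - p‖
          ≤ r / (2 * (‖x₀ - p‖ + 1)) * (‖x₀ - p‖ + 1) := by
            apply mul_le_mul_of_nonneg_left (le_of_lt h1) (le_of_lt (div_pos hr (by positivity)))
        _ = r / 2 := by field_simp
        _ < r := by linarith
    have hqS : g q = A q := (interior_subset (hball hqball) : q ∈ S)
    set a : ℝ := 1 / (1 + ε) with ha
    set b : ℝ := ε / (1 + ε) with hb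
    have h1ε : (0:ℝ) < 1 + ε := by linarith
    have hab : a + b = 1 := by rw [ha, hb]; field_simp
    have hapos : 0 < a := by positivity
    have hbpos : 0 < b := by rw [hb]; positivity
    have hcombo : a • q + b • p = x₀ := by
      rw [hq, smul_add, smul_smul]
      have hcoef : a * ε = b := by rw [ha, hb]; field_simp
      rw [hcoef, smul_sub]
      have : a • x₀ + (b • x₀ - b • p) + b • p = (a + b) • x₀ := by
        rw [add_smul]; abel
      rw [this, hab, one_smul]
    -- convexity of g
    have hgle : g x₀ ≤ a * g q + b * g p := by
      have := hg.2 (Set.mem_univ q) (Set.mem_univ p) hapos.le hbpos.le hab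
      rwa [hcombo] at this
    have hA : A x₀ = a * A q + b * A p := by
      rw [← hcombo]
      exact Convex.combo_affine_apply hab
    have : g x₀ < g x₀ := by
      calc g x₀ ≤ a * g q + b * g p := hgle
        _ = a * A q + b * g p := by rw [hqS]
        _ < a * A q + b * A p := by
            have := mul_lt_mul_of_pos_left hlt hbpos
            linarith
        _ = A x₀ := hA.symm
        _ = g x₀ := hx₀S.symm
    exact lt_irrefl _ this
  -- Step 2: S equals the convex sublevel set
  have hSeq : S = {x | g x ≤ A x} := by
    ext x
    constructor
    · intro hx; exact le_of_eq hx
    · intro hx; exact le_antisymm hx (hnonneg x)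
  have hconv : Convex ℝ S := by
    rw [hSeq]
    intro x hx y hy a b ha hb hab
    simp only [Set.mem_setOf_eq] at hx hy ⊢
    have hgle := hg.2 (Set.mem_univ x) (Set.mem_univ y) ha hb hab
    have hA : A (a • x + b • y) = a * A x + b * A y := Convex.combo_affine_apply hab
    have h1 : a * g x ≤ a * A x := mul_le_mul_of_nonneg_left hx ha
    have h2 : b * g y ≤ b * A y := mul_le_mul_of_nonneg_left hy hb
    calc g (a • x + b • y) ≤ a • g x + b • g y := hgle
      _ = a * g x + b * g y := rfl
      _ ≤ a * A x + b * A y := by linarith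
      _ = A (a • x + b • y) := hA.symm
  -- Step 3: approach z along the segment to x₀
  have hzS : z ∈ S := hz
  have hmem : ∀ t : ℝ, t ∈ Set.Ioc (0:ℝ) 1 → z + t • (x₀ - z) ∈ interior S :=
    fun t ht => hconv.add_smul_sub_mem_interior hzS hx₀ ht
  have htend : Filter.Tendsto (fun t : ℝ => z + t • (x₀ - z)) (nhdsWithin 0 (Set.Ioi 0))
      (nhds z) := by
    have : Filter.Tendsto (fun t : ℝ => z + t • (x₀ - z)) (nhds 0) (nhds (z + (0:ℝ) • (x₀ - z))) := by
      exact (continuous_const.add (continuous_id.smul continuous_const)).tendsto 0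
    simp only [zero_smul, add_zero] at this
    exact this.mono_left nhdsWithin_le_nhds
  refine mem_closure_of_tendsto htend ?_
  filter_upwards [Ioc_mem_nhdsGT_of_mem (by norm_num : (0:ℝ) ∈ Set.Ico (0:ℝ) 1)] with t ht
  exact hmem t ht
end

section
/- Let c¹₁, …, c¹_p : ℝⁿ → ℝ and c²₁, …, c²_q : ℝⁿ → ℝ be C¹ functions, define g(x) = Σ_{i=1}^p max(c¹_i(x), 0) + Σ_{j=1}^q |c²_j(x)| and, for θ ∈ {0,1}^p, σ ∈ {−1,1}^q, g_{θ,σ}(x) = Σ_{i=1}^p θ_i c¹_i(x) + Σ_{j=1}^q σ_j c²_j(x). Fix x ∈ ℝⁿ and assume the family of gradients {∇c¹_i(x) : i with c¹_i(x) = 0} ∪ {∇c²_j(x) : j with c²_j(x) = 0} is linearly independent (LICQ). Then for every (θ, σ) with g(x) = g_{θ,σ}(x), one has x ∈ closure(interior({y ∈ ℝⁿ : g(y) = g_{θ,σ}(y)})). -/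
open Filter Topology

lemma aux_pi_surj {K : Type*} [Field K] {V : Type*} [AddCommGroup V] [Module K V]
    {ι : Type*} [Fintype ι] (f : ι → (V →ₗ[K] K))
    (hf : LinearIndependent K f) :
    Function.Surjective (fun y (i : ι) => f i y) := by
  classical
  have hrange : LinearMap.range (LinearMap.pi f) = ⊤ := by
    by_contra h
    obtain ⟨φ, hφ0, hφ⟩ := Submodule.exists_dual_map_eq_bot_of_lt_top
      (lt_top_iff_ne_top.2 h) inferInstance
    set a : ι → K := fun i => φ (Pi.single i 1) with ha
    have hrep : ∀ v : ι → K, φ v = ∑ i, v i * a i := by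
      intro v
      have hv : v = ∑ i, (v i) • (Pi.single i (1 : K) : ι → K) := by
        funext j
        simp [Finset.sum_apply, Pi.single_apply]
      nth_rewrite 1 [hv]
      rw [map_sum]
      simp [ha, smul_eq_mul]
    have hker : ∀ y : V, φ (LinearMap.pi f y) = 0 := by
      intro y
      have h1 : LinearMap.pi f y ∈ LinearMap.range (LinearMap.pi f) :=
        LinearMap.mem_range_self _ y
      have h2 := Submodule.mem_map_of_mem (f := φ) h1
      rw [hφ] at h2
      exact (Submodule.mem_bot _).1 h2
    have hlin : ∑ i, a i • f i = 0 := by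
      apply LinearMap.ext; intro y
      have := hker y
      rw [hrep] at this
      simpa [LinearMap.pi_apply, mul_comm] using this
    have hz : ∀ i, a i = 0 := Fintype.linearIndependent_iff.1 hf a hlin
    apply hφ0
    apply LinearMap.ext; intro v
    rw [hrep]
    simp [hz]
  intro v
  obtain ⟨y, hy⟩ := LinearMap.range_eq_top.1 hrange v
  exact ⟨y, by funext i; exact congrFun hy i⟩

/-- Main claim of Remark SM6 (exact penalty method). Under LICQ at `x`
(linear independence of the gradients of the active constraints), every selection function
`g_{θ,σ}` of the exact ℓ¹ penalty term `g` that is active at `x` is essentially active: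
`x ∈ closure (interior {y | g y = g_{θ,σ} y})`. -/
theorem stmt16 {n p q : ℕ}
    (c1 : Fin p → EuclideanSpace ℝ (Fin n) → ℝ) (hc1 : ∀ i, ContDiff ℝ 1 (c1 i))
    (c2 : Fin q → EuclideanSpace ℝ (Fin n) → ℝ) (hc2 : ∀ j, ContDiff ℝ 1 (c2 j))
    (g : EuclideanSpace ℝ (Fin n) → ℝ)
    (hg : g = fun y => (∑ i, max (c1 i y) 0) + ∑ j, |c2 j y|)
    (x : EuclideanSpace ℝ (Fin n))
    (hLICQ : LinearIndependent ℝ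
      (Sum.elim (fun i : {i : Fin p // c1 i x = 0} => gradient (c1 i.1) x)
        (fun j : {j : Fin q // c2 j x = 0} => gradient (c2 j.1) x)))
    (θ : Fin p → ℝ) (hθ : ∀ i, θ i = 0 ∨ θ i = 1)
    (σ : Fin q → ℝ) (hσ : ∀ j, σ j = -1 ∨ σ j = 1)
    (hact : g x = (∑ i, θ i * c1 i x) + ∑ j, σ j * c2 j x) :
    x ∈ closure (interior {y | g y = (∑ i, θ i * c1 i y) + ∑ j, σ j * c2 j y}) := by
  classical
  let E := EuclideanSpace ℝ (Fin n)
  -- termwise equalities at x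
  have hact' : (∑ i, max (c1 i x) 0) + ∑ j, |c2 j x|
      = (∑ i, θ i * c1 i x) + ∑ j, σ j * c2 j x := by
    rw [hg] at hact; exact hact
  have t1 : ∀ i ∈ Finset.univ, (0:ℝ) ≤ max (c1 i x) 0 - θ i * c1 i x := by
    intro i _
    rcases hθ i with h | h
    · have := le_max_right (c1 i x) 0; rw [h]; linarith
    · have := le_max_left (c1 i x) 0; rw [h]; linarith
  have t2 : ∀ j ∈ Finset.univ, (0:ℝ) ≤ |c2 j x| - σ j * c2 j x := by
    intro j _
    rcases hσ j with h | h
    · have := neg_abs_le (c2 j x); rw [h]; linarith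
    · have := le_abs_self (c2 j x); rw [h]; linarith
  have hsum1 : ∑ i, (max (c1 i x) 0 - θ i * c1 i x) = 0 := by
    have n1 : (0:ℝ) ≤ ∑ i, (max (c1 i x) 0 - θ i * c1 i x) := Finset.sum_nonneg t1
    have n2 : (0:ℝ) ≤ ∑ j, (|c2 j x| - σ j * c2 j x) := Finset.sum_nonneg t2
    have e1 : ∑ i, (max (c1 i x) 0 - θ i * c1 i x) = (∑ i, max (c1 i x) 0) - ∑ i, θ i * c1 i x :=
      Finset.sum_sub_distrib _ _
    have e2 : ∑ j, (|c2 j x| - σ j * c2 j x) = (∑ j, |c2 j x|) - ∑ j, σ j * c2 j x :=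
      Finset.sum_sub_distrib _ _
    rw [e1] at n1 ⊢; rw [e2] at n2; linarith
  have hsum2 : ∑ j, (|c2 j x| - σ j * c2 j x) = 0 := by
    have n1 : (0:ℝ) ≤ ∑ i, (max (c1 i x) 0 - θ i * c1 i x) := Finset.sum_nonneg t1
    have n2 : (0:ℝ) ≤ ∑ j, (|c2 j x| - σ j * c2 j x) := Finset.sum_nonneg t2
    have e1 : ∑ i, (max (c1 i x) 0 - θ i * c1 i x) = (∑ i, max (c1 i x) 0) - ∑ i, θ i * c1 i x :=
      Finset.sum_sub_distrib _ _
    have e2 : ∑ j, (|c2 j x| - σ j * c2 j x) = (∑ j, |c2 j x|) - ∑ j, σ j * c2 j x :=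
      Finset.sum_sub_distrib _ _
    rw [e1] at n1; rw [e2] at n2 ⊢; linarith
  have h1 : ∀ i, max (c1 i x) 0 = θ i * c1 i x := by
    intro i
    have := (Finset.sum_eq_zero_iff_of_nonneg t1).1 hsum1 i (Finset.mem_univ i)
    linarith
  have h2 : ∀ j, |c2 j x| = σ j * c2 j x := by
    intro j
    have := (Finset.sum_eq_zero_iff_of_nonneg t2).1 hsum2 j (Finset.mem_univ j)
    linarith
  -- signs
  set s : Fin p → ℝ := fun i => 2 * θ i - 1 with hs
  have hs1 : ∀ i, s i * s i = 1 := by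
    intro i; rcases hθ i with h | h <;> simp [hs, h] <;> ring
  have hσ1 : ∀ j, σ j * σ j = 1 := by
    intro j; rcases hσ j with h | h <;> simp [h]
  -- pointwise selection identities under strict sign conditions
  have key1 : ∀ i y, 0 < s i * c1 i y → max (c1 i y) 0 = θ i * c1 i y := by
    intro i y hy
    rcases hθ i with h | h
    · have : c1 i y < 0 := by simp [hs, h] at hy; linarith
      simp [h, max_eq_right this.le]
    · have : 0 < c1 i y := by simp [hs, h] at hy; linarith
      simp [h, max_eq_left this.le]
  have key2 : ∀ j y, 0 < σ j * c2 j y → |c2 j y| = σ j * c2 j y := by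
    intro j y hy
    rcases hσ j with h | h
    · have : c2 j y < 0 := by rw [h] at hy; linarith
      rw [abs_of_neg this, h]; ring
    · have : 0 < c2 j y := by rw [h] at hy; linarith
      rw [abs_of_pos this, h]; ring
  -- nonactive strictness at x
  have hna1 : ∀ i, c1 i x ≠ 0 → 0 < s i * c1 i x := by
    intro i hi
    have hh := h1 i
    show 0 < (2 * θ i - 1) * c1 i x
    rcases hθ i with h | h
    · rw [h] at hh
      have hle : c1 i x ≤ 0 := by
        by_contra hc
        push_neg at hc
        rw [max_eq_left hc.le] at hh
        exact hi (by linarith)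
      have : c1 i x < 0 := lt_of_le_of_ne hle hi
      rw [h]; nlinarith
    · rw [h] at hh
      have hge : 0 ≤ c1 i x := by
        by_contra hc
        push_neg at hc
        rw [max_eq_right hc.le] at hh
        exact hi (by linarith)
      have : 0 < c1 i x := lt_of_le_of_ne hge (Ne.symm hi)
      rw [h]; nlinarith
  have hna2 : ∀ j, c2 j x ≠ 0 → 0 < σ j * c2 j x := by
    intro j hj
    rw [← h2 j]
    exact abs_pos.2 hj
  -- the open set W
  set W : Set E := (⋂ i, {y | 0 < s i * c1 i y}) ∩ (⋂ j, {y | 0 < σ j * c2 j y}) with hW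
  have hWopen : IsOpen W := by
    apply IsOpen.inter
    · exact isOpen_iInter_of_finite fun i =>
        isOpen_lt continuous_const (continuous_const.mul (hc1 i).continuous)
    · exact isOpen_iInter_of_finite fun j =>
        isOpen_lt continuous_const (continuous_const.mul (hc2 j).continuous)
  have hWsub : W ⊆ {y | g y = (∑ i, θ i * c1 i y) + ∑ j, σ j * c2 j y} := by
    rintro y ⟨hy1, hy2⟩
    simp only [Set.mem_iInter, Set.mem_setOf_eq] at hy1 hy2 ⊢
    rw [hg]
    exact congrArg₂ (· + ·)
      (Finset.sum_congr rfl fun i _ => key1 i y (hy1 i))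
      (Finset.sum_congr rfl fun j _ => key2 j y (hy2 j))
  -- the submersion
  set ι := {i : Fin p // c1 i x = 0} ⊕ {j : Fin q // c2 j x = 0} with hι
  set φfun : ι → E → ℝ := fun idx => Sum.elim (fun i => c1 i.1) (fun j => c2 j.1) idx with hφfun
  set φ' : ι → (E →L[ℝ] ℝ) :=
    fun idx => Sum.elim (fun i : {i : Fin p // c1 i x = 0} => fderiv ℝ (c1 i.1) x)
      (fun j : {j : Fin q // c2 j x = 0} => fderiv ℝ (c2 j.1) x) idx with hφ'
  have hF : HasStrictFDerivAt (fun y (idx : ι) => φfun idx y) (ContinuousLinearMap.pi φ') x := by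
    rw [hasStrictFDerivAt_pi]
    rintro (i | j)
    · simp only [hφfun, hφ', Sum.elim_inl]
      exact ((hc1 i.1).contDiffAt).hasStrictFDerivAt one_ne_zero
    · simp only [hφfun, hφ', Sum.elim_inr]
      exact ((hc2 j.1).contDiffAt).hasStrictFDerivAt one_ne_zero
  have hgradeq : ∀ idx : ι, φ' idx = (InnerProductSpace.toDual ℝ (EuclideanSpace ℝ (Fin n)))
      ((Sum.elim (fun i : {i : Fin p // c1 i x = 0} => gradient (c1 i.1) x)
        (fun j : {j : Fin q // c2 j x = 0} => gradient (c2 j.1) x)) idx) := by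
    rintro (i | j) <;>
      simp [hφ', gradient, LinearIsometryEquiv.apply_symm_apply]
  have hind1 : LinearIndependent ℝ φ' := by
    have h := hLICQ.map'
      (InnerProductSpace.toDual ℝ (EuclideanSpace ℝ (Fin n))).toLinearEquiv.toLinearMap
      (LinearEquiv.ker _)
    convert h using 1
    funext idx
    exact hgradeq idx
    rfl
    rfl
  have hind2 : LinearIndependent ℝ (fun idx : ι => (φ' idx : EuclideanSpace ℝ (Fin n) →ₗ[ℝ] ℝ)) := by
    have h := hind1.map' (ContinuousLinearMap.coeLM ℝ)
      (LinearMap.ker_eq_bot.2 ContinuousLinearMap.coe_injective)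
    exact h
  have hsurjfun := aux_pi_surj _ hind2
  have hsurj : LinearMap.range (ContinuousLinearMap.pi φ' : E →ₗ[ℝ] (ι → ℝ)) = ⊤ := by
    rw [LinearMap.range_eq_top]
    intro v
    obtain ⟨y, hy⟩ := hsurjfun v
    exact ⟨y, hy⟩
  have hmap : Filter.map (fun y (idx : ι) => φfun idx y) (𝓝 x) = 𝓝 (fun idx : ι => φfun idx x) :=
    hF.map_nhds_eq_of_surj hsurj
  have hFx : (fun idx : ι => φfun idx x) = 0 := by
    funext idx
    rcases idx with i | j
    · exact i.2
    · exact j.2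
  -- closure argument
  rw [mem_closure_iff_nhds]
  intro t ht
  have hU1 : IsOpen (⋂ i : {i : Fin p // c1 i x ≠ 0}, {y | 0 < s i.1 * c1 i.1 y}) :=
    isOpen_iInter_of_finite fun i =>
      isOpen_lt continuous_const (continuous_const.mul (hc1 i.1).continuous)
  have hU2 : IsOpen (⋂ j : {j : Fin q // c2 j x ≠ 0}, {y | 0 < σ j.1 * c2 j.1 y}) :=
    isOpen_iInter_of_finite fun j =>
      isOpen_lt continuous_const (continuous_const.mul (hc2 j.1).continuous)
  have hxU1 : x ∈ ⋂ i : {i : Fin p // c1 i x ≠ 0}, {y | 0 < s i.1 * c1 i.1 y} :=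
    Set.mem_iInter.2 fun i => hna1 i.1 i.2
  have hxU2 : x ∈ ⋂ j : {j : Fin q // c2 j x ≠ 0}, {y | 0 < σ j.1 * c2 j.1 y} :=
    Set.mem_iInter.2 fun j => hna2 j.1 j.2
  set N' : Set (EuclideanSpace ℝ (Fin n)) := t ∩ ((⋂ i : {i : Fin p // c1 i x ≠ 0}, {y | 0 < s i.1 * c1 i.1 y}) ∩
      (⋂ j : {j : Fin q // c2 j x ≠ 0}, {y | 0 < σ j.1 * c2 j.1 y})) with hN'def
  have hN' : N' ∈ 𝓝 x :=
    Filter.inter_mem ht (Filter.inter_mem (hU1.mem_nhds hxU1) (hU2.mem_nhds hxU2))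
  have himg : (fun y (idx : ι) => φfun idx y) '' N' ∈ 𝓝 (0 : ι → ℝ) := by
    rw [← hFx, ← hmap]
    exact Filter.image_mem_map hN'
  obtain ⟨ε, hε, hball⟩ := Metric.mem_nhds_iff.1 himg
  set sv : ι → ℝ := Sum.elim (fun i => s i.1) (fun j => σ j.1) with hsv
  have habs : ∀ idx : ι, |sv idx| = 1 := by
    rintro (i | j)
    · show |s i.1| = 1
      rcases hθ i.1 with h | h <;> simp [hs, h] <;> norm_num
    · show |σ j.1| = 1
      rcases hσ j.1 with h | h <;> simp [h]
  have hv : (ε/2) • sv ∈ Metric.ball (0 : ι → ℝ) ε := by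
    rw [Metric.mem_ball, dist_zero_right]
    have hle : ‖(ε/2) • sv‖ ≤ ε/2 := by
      refine (pi_norm_le_iff_of_nonneg (by positivity)).2 fun idx => ?_
      rw [Pi.smul_apply, norm_smul, Real.norm_eq_abs, Real.norm_eq_abs, habs idx,
        abs_of_pos (by positivity : (0:ℝ) < ε/2)]
      linarith
    linarith
  obtain ⟨y, hyN, hyv⟩ := hball hv
  have hyW : y ∈ W := by
    constructor
    · refine Set.mem_iInter.2 fun i => ?_
      by_cases hi : c1 i x = 0
      · have hcf := congrFun hyv (Sum.inl ⟨i, hi⟩)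
        have hcy : c1 i y = (ε/2) * s i := by
          simpa [hφfun, hsv] using hcf
        show 0 < s i * c1 i y
        rw [hcy]
        have heq : s i * (ε / 2 * s i) = ε / 2 * (s i * s i) := by ring
        rw [heq, hs1 i]; linarith
      · exact Set.mem_iInter.1 hyN.2.1 ⟨i, hi⟩
    · refine Set.mem_iInter.2 fun j => ?_
      by_cases hj : c2 j x = 0
      · have hcf := congrFun hyv (Sum.inr ⟨j, hj⟩)
        have hcy : c2 j y = (ε/2) * σ j := by
          simpa [hφfun, hsv] using hcf
        show 0 < σ j * c2 j y
        rw [hcy]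
        have heq : σ j * (ε / 2 * σ j) = ε / 2 * (σ j * σ j) := by ring
        rw [heq, hσ1 j]; linarith
      · exact Set.mem_iInter.1 hyN.2.2 ⟨j, hj⟩
  exact ⟨y, hyN.1, interior_maximal hWsub hWopen hyW⟩
end
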